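/- arXiv:2008.03065 — 14 statements merged into one kernel-verified Lean document; each statement's English description precedes it below -/
import Mathlib

section
/- Let K be a finite poset and f = f_1 ∘ ... ∘ f_k where f and each f_i are idempotent regressive order-preserving endomorphisms of K. Then the image of f equals the intersection of the images of the f_i. -/
private lemma fold_reg {K : Type*} [PartialOrder K] (L : List (K → K))
    (hreg : ∀ g ∈ L, ∀ x, g x ≤ x) : ∀ x, (L.foldr (· ∘ ·) id) x ≤ x := by
  induction L with
  | nil => intro x; simp
  | cons g L ih =>
    intro x
    have h1 := ih (fun g hg => hreg g (List.mem_cons_of_mem _ hg)) x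
    have h2 := hreg g (List.mem_cons_self) ((L.foldr (· ∘ ·) id) x)
    simpa using h2.trans h1

private lemma fold_fix {K : Type*} [PartialOrder K] (L : List (K → K))
    (hreg : ∀ g ∈ L, ∀ x, g x ≤ x) {y : K}
    (hy : (L.foldr (· ∘ ·) id) y = y) : ∀ g ∈ L, g y = y := by
  induction L with
  | nil => simp
  | cons g L ih =>
    have hreg' : ∀ h ∈ L, ∀ x, h x ≤ x := fun h hh => hreg h (List.mem_cons_of_mem _ hh)
    have h1 : (L.foldr (· ∘ ·) id) y ≤ y := fold_reg L hreg' y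
    have h2 : g ((L.foldr (· ∘ ·) id) y) ≤ (L.foldr (· ∘ ·) id) y :=
      hreg g (List.mem_cons_self) _
    have hy' : g ((L.foldr (· ∘ ·) id) y) = y := by simpa using hy
    have hle : y ≤ (L.foldr (· ∘ ·) id) y := hy'.symm.trans_le h2
    have hfy : (L.foldr (· ∘ ·) id) y = y := le_antisymm h1 hle
    intro h hh
    rcases List.mem_cons.1 hh with rfl | hh
    · calc h y = h ((L.foldr (· ∘ ·) id) y) := by rw [hfy]
        _ = y := hy'
    · exact ih hreg' hfy h hh

private lemma fix_fold {K : Type*} [PartialOrder K] (L : List (K → K)) {y : K}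
    (hy : ∀ g ∈ L, g y = y) : (L.foldr (· ∘ ·) id) y = y := by
  induction L with
  | nil => simp
  | cons g L ih =>
    have := ih (fun h hh => hy h (List.mem_cons_of_mem _ hh))
    simp only [List.foldr_cons, Function.comp_apply, this]
    exact hy g (List.mem_cons_self)

/-- If `f = f₁ ∘ ⋯ ∘ f_k` with `f` and each `f_i` idempotent regressive
order-preserving endomorphisms of a finite poset `K`, then
`im f = ⋂ i, im (f_i)`. -/
theorem stmt_1 {K : Type*} [PartialOrder K] [Fintype K]
    (k : ℕ) (f : K → K) (fs : Fin k → K → K)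
    (hfreg : ∀ x, f x ≤ x) (hfmono : Monotone f) (hfidem : f ∘ f = f)
    (hreg : ∀ i, ∀ x, fs i x ≤ x) (hmono : ∀ i, Monotone (fs i))
    (hidem : ∀ i, fs i ∘ fs i = fs i)
    (hcomp : f = (List.ofFn fs).foldr (· ∘ ·) id) :
    Set.range f = ⋂ i, Set.range (fs i) := by
  have hregL : ∀ g ∈ List.ofFn fs, ∀ x, g x ≤ x := by
    intro g hg x
    obtain ⟨i, rfl⟩ := List.mem_ofFn.1 hg
    exact hreg i x
  ext y
  simp only [Set.mem_iInter, Set.mem_range]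
  constructor
  · rintro ⟨x, rfl⟩ i
    have hfix : f (f x) = f x := congrFun hfidem x
    have : (List.ofFn fs).foldr (· ∘ ·) id (f x) = f x := by rw [← hcomp]; exact hfix
    have := fold_fix _ hregL this (fs i) (List.mem_ofFn.2 ⟨i, rfl⟩)
    exact ⟨f x, this⟩
  · intro h
    have hfixes : ∀ g ∈ List.ofFn fs, g y = y := by
      intro g hg
      obtain ⟨i, rfl⟩ := List.mem_ofFn.1 hg
      obtain ⟨x, hx⟩ := h i
      calc fs i y = fs i (fs i x) := by rw [hx]
        _ = fs i x := congrFun (hidem i) x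
        _ = y := hx
    exact ⟨y, by rw [hcomp]; exact fix_fold _ hfixes⟩
end

section
/- Let K be a finite poset and f = f_1 ∘ ... ∘ f_k with f, f_1, ..., f_k regressive order-preserving endomorphisms of K. Then the following are equivalent: (1) f is idempotent; (2) f_i ∘ f = f for all i; (3) f ∘ f_i = f for all i. -/
private lemma foldr_le_aux {K : Type*} [PartialOrder K] (l : List (K → K))
    (h : ∀ g ∈ l, ∀ x, g x ≤ x) : ∀ x, l.foldr (· ∘ ·) id x ≤ x := by
  induction l with
  | nil => intro x; simp
  | cons g t ih =>
    intro x
    simp only [List.foldr_cons, Function.comp_apply]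
    calc g (t.foldr (· ∘ ·) id x) ≤ t.foldr (· ∘ ·) id x := h g (by simp) _
      _ ≤ x := ih (fun g hg => h g (by simp [hg])) x

private lemma fix_of_fix_aux {K : Type*} [PartialOrder K] (l : List (K → K))
    (h : ∀ g ∈ l, ∀ x, g x ≤ x) {y : K} (hy : l.foldr (· ∘ ·) id y = y) :
    ∀ g ∈ l, g y = y := by
  induction l with
  | nil => simp
  | cons g t ih =>
    have hreg : ∀ g ∈ t, ∀ x, g x ≤ x := fun g hg => h g (by simp [hg])
    have hT : t.foldr (· ∘ ·) id y ≤ y := foldr_le_aux t hreg y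
    simp only [List.foldr_cons, Function.comp_apply] at hy
    have hg : g (t.foldr (· ∘ ·) id y) ≤ t.foldr (· ∘ ·) id y := h g (by simp) _
    have hTy : t.foldr (· ∘ ·) id y = y :=
      le_antisymm hT (by calc y = g (t.foldr (· ∘ ·) id y) := hy.symm
                           _ ≤ _ := hg)
    intro g' hg'
    rcases List.mem_cons.mp hg' with h1 | h2
    · calc g' y = g (t.foldr (· ∘ ·) id y) := by rw [h1, hTy]
        _ = y := hy
    · exact ih hreg hTy g' h2

private lemma foldr_fix_aux {K : Type*} (l : List (K → K)) {y : K}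
    (h : ∀ g ∈ l, g y = y) : l.foldr (· ∘ ·) id y = y := by
  induction l with
  | nil => simp
  | cons g t ih =>
    simp only [List.foldr_cons, Function.comp_apply]
    rw [ih (fun g hg => h g (by simp [hg])), h g (by simp)]

private lemma comp_foldr_aux {K : Type*} (f : K → K) (l : List (K → K))
    (h : ∀ g ∈ l, f ∘ g = f) : f ∘ l.foldr (· ∘ ·) id = f := by
  induction l with
  | nil => simp
  | cons g t ih =>
    simp only [List.foldr_cons]
    rw [← Function.comp_assoc, h g (by simp), ih (fun g hg => h g (by simp [hg]))]

/-- For `f = f₁ ∘ ⋯ ∘ f_k` regressive order-preserving endomorphisms of a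
finite poset, the following are equivalent: `f` idempotent; `f_i ∘ f = f` for all `i`;
`f ∘ f_i = f` for all `i`. -/
theorem stmt_2 {K : Type*} [PartialOrder K] [Fintype K]
    (k : ℕ) (f : K → K) (fs : Fin k → K → K)
    (hfreg : ∀ x, f x ≤ x) (hfmono : Monotone f)
    (hreg : ∀ i, ∀ x, fs i x ≤ x) (hmono : ∀ i, Monotone (fs i))
    (hcomp : f = (List.ofFn fs).foldr (· ∘ ·) id) :
    (f ∘ f = f ↔ ∀ i, fs i ∘ f = f) ∧ (f ∘ f = f ↔ ∀ i, f ∘ fs i = f) := by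
  set l := List.ofFn fs with hl
  have hlreg : ∀ g ∈ l, ∀ x, g x ≤ x := by
    intro g hg
    obtain ⟨i, rfl⟩ := List.mem_ofFn.mp hg
    exact hreg i
  have h12 : f ∘ f = f → ∀ i, fs i ∘ f = f := by
    intro hidem i
    funext x
    have hy : l.foldr (· ∘ ·) id (f x) = f x := by
      rw [← hcomp]; exact congrFun hidem x
    exact fix_of_fix_aux l hlreg hy (fs i) (List.mem_ofFn.mpr ⟨i, rfl⟩)
  have h21 : (∀ i, fs i ∘ f = f) → f ∘ f = f := by
    intro h2
    funext x
    have hfix : l.foldr (· ∘ ·) id (f x) = f x := foldr_fix_aux l (by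
      intro g hg
      obtain ⟨i, rfl⟩ := List.mem_ofFn.mp hg
      exact congrFun (h2 i) x)
    rw [← hcomp] at hfix
    exact hfix
  refine ⟨⟨h12, h21⟩, ⟨?_, ?_⟩⟩
  · intro hidem i
    have h2 := h12 hidem
    funext x
    apply le_antisymm (hfmono (hreg i x))
    have h1 : f x ≤ fs i x := by
      calc f x = fs i (f x) := (congrFun (h2 i) x).symm
        _ ≤ fs i x := hmono i (hfreg x)
    calc f x = f (f x) := (congrFun hidem x).symm
      _ ≤ f (fs i x) := hfmono h1
  · intro h3
    have : f ∘ l.foldr (· ∘ ·) id = f := comp_foldr_aux f l (by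
      intro g hg
      obtain ⟨i, rfl⟩ := List.mem_ofFn.mp hg
      exact h3 i)
    rw [← hcomp] at this
    exact this
end

section
/- For a finite poset K, the poset of idempotents of Or(K), ordered by P ≤ Q iff PQ = QP = Q, is a lattice (it has a minimum id_K, and any two elements have a join). -/
/-- The set of idempotent regressive order-preserving endomorphisms of `K`. -/
def IdemOr (K : Type*) [PartialOrder K] : Set (K → K) :=
  {f | (∀ x, f x ≤ x) ∧ Monotone f ∧ f ∘ f = f}

/-- The order on idempotents: `P ≤ Q` iff `P ∘ Q = Q ∘ P = Q`. -/
def idemLe {K : Type*} (P Q : K → K) : Prop := P ∘ Q = Q ∧ Q ∘ P = Q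

private lemma iter_anti {K : Type*} [PartialOrder K] {f : K → K}
    (hf : ∀ x, f x ≤ x) (x : K) : ∀ i j, i ≤ j → f^[j] x ≤ f^[i] x := by
  intro i j hij
  induction j with
  | zero => simp_all
  | succ j ih =>
    rcases Nat.lt_or_ge i (j+1) with h | h
    · have := ih (Nat.lt_succ_iff.mp h)
      calc f^[j+1] x = f (f^[j] x) := Function.iterate_succ_apply' f j x
        _ ≤ f^[j] x := hf _
        _ ≤ f^[i] x := this
    · have : i = j + 1 := le_antisymm hij h
      subst this; exact le_refl _

private lemma exists_consec {K : Type*} [PartialOrder K] [Fintype K] {f : K → K}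
    (hf : ∀ x, f x ≤ x) (x : K) :
    ∃ i ≤ Fintype.card K, f^[i+1] x = f^[i] x := by
  by_contra hc
  push_neg at hc
  have hlt : ∀ i ≤ Fintype.card K, f^[i+1] x < f^[i] x := fun i hi =>
    lt_of_le_of_ne (by rw [Function.iterate_succ_apply']; exact hf _) (hc i hi)
  have hstrict : ∀ i j, i < j → j ≤ Fintype.card K + 1 → f^[j] x < f^[i] x := by
    intro i j hij hj
    induction j with
    | zero => omega
    | succ j ih =>
      rcases Nat.lt_or_ge i j with h | h
      · exact lt_of_le_of_lt
          (le_of_lt (hlt j (Nat.succ_le_succ_iff.mp hj))) (ih h (by omega))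
      · have : i = j := by omega
        subst this
        exact hlt i (Nat.succ_le_succ_iff.mp hj)
  have hinj : Function.Injective (fun i : Fin (Fintype.card K + 2) => f^[(i : ℕ)] x) := by
    intro i j hij
    simp only at hij
    by_contra hne
    have hne' : (i : ℕ) ≠ (j : ℕ) := fun h => hne (Fin.ext h)
    have hi2 := i.isLt
    have hj2 := j.isLt
    rcases hne'.lt_or_gt with h | h
    · exact (ne_of_gt (hstrict i j h (by omega))) hij
    · exact (ne_of_lt (hstrict j i h (by omega))) hij
  have hcard := Fintype.card_le_of_injective _ hinj
  rw [Fintype.card_fin] at hcard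
  omega

private lemma iter_stable {K : Type*} [PartialOrder K] [Fintype K] {f : K → K}
    (hf : ∀ x, f x ≤ x) (x : K) :
    f (f^[Fintype.card K] x) = f^[Fintype.card K] x := by
  obtain ⟨i, hi, hfix⟩ := exists_consec hf x
  have key : ∀ j, i ≤ j → f^[j] x = f^[i] x := by
    intro j hij
    induction j with
    | zero =>
      have h0 : i = 0 := Nat.le_zero.mp hij
      rw [h0]
    | succ j ih =>
      rcases Nat.lt_or_ge i (j+1) with h | h
      · have hj := ih (Nat.lt_succ_iff.mp h)
        rw [Function.iterate_succ_apply', hj]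
        exact (Function.iterate_succ_apply' f i x).symm.trans hfix
      · have : i = j + 1 := le_antisymm hij h
        subst this; rfl
  have h1 := key (Fintype.card K) hi
  rw [h1]
  exact (Function.iterate_succ_apply' f i x).symm.trans ((key (i+1) (Nat.le_succ i)))

private lemma iter_ge {K : Type*} [PartialOrder K] [Fintype K] {f : K → K}
    (hf : ∀ x, f x ≤ x) (x : K) :
    ∀ m, Fintype.card K ≤ m → f^[m] x = f^[Fintype.card K] x := by
  intro m hm
  induction m with
  | zero =>
    have h0 : Fintype.card K = 0 := Nat.le_zero.mp hm
    rw [h0]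
  | succ m ih =>
    rcases Nat.lt_or_ge (Fintype.card K) (m+1) with h | h
    · rw [Function.iterate_succ_apply', ih (Nat.lt_succ_iff.mp h), iter_stable hf]
    · have : Fintype.card K = m + 1 := le_antisymm hm h
      rw [this]

/-- The poset of idempotents of `Or(K)`, ordered by `P ≤ Q` iff
`PQ = QP = Q`, is a lattice: `id` is its minimum and any two elements have a join. -/
theorem stmt_3 {K : Type*} [PartialOrder K] [Fintype K] :
    (∀ P ∈ IdemOr K, idemLe (id : K → K) P) ∧
    (∀ P ∈ IdemOr K, ∀ Q ∈ IdemOr K, ∃ T ∈ IdemOr K,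
      idemLe P T ∧ idemLe Q T ∧
      ∀ U ∈ IdemOr K, idemLe P U → idemLe Q U → idemLe T U) := by
  constructor
  · intro P _
    exact ⟨Function.id_comp P, Function.comp_id P⟩
  · rintro P ⟨hPr, hPm, hPi⟩ Q ⟨hQr, hQm, hQi⟩
    set n := Fintype.card K with hn
    set f : K → K := P ∘ Q with hfdef
    have hfr : ∀ x, f x ≤ x := fun x => le_trans (hPr _) (hQr x)
    have hfm : Monotone f := hPm.comp hQm
    set T : K → K := f^[n] with hTdef
    have hTr : ∀ x, T x ≤ x := fun x => by
      simpa using iter_anti hfr x 0 n (Nat.zero_le n)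
    have hTm : Monotone T := hfm.iterate n
    have hTfix : ∀ x, f (T x) = T x := fun x => iter_stable hfr x
    -- P fixes T x and Q fixes T x
    have hPfix : ∀ x, P (T x) = T x := by
      intro x
      have h1 : P (Q (T x)) = T x := hTfix x
      have h2 : P (P (Q (T x))) = P (Q (T x)) := congrFun hPi (Q (T x))
      rw [h1] at h2
      exact h2
    have hQfix : ∀ x, Q (T x) = T x := by
      intro x
      have h1 : P (Q (T x)) = T x := hTfix x
      refine le_antisymm (hQr _) ?_
      calc T x = P (Q (T x)) := h1.symm
        _ ≤ Q (T x) := hPr _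
    -- T is idempotent
    have hTi : T ∘ T = T := by
      funext x
      show f^[n] (f^[n] x) = f^[n] x
      rw [← Function.iterate_add_apply]
      rw [iter_ge hfr x (n + n) (Nat.le_add_left n n)]
    -- T x ≤ P x and T x ≤ Q x
    have hTleP : ∀ x, T x ≤ P x := by
      intro x
      have : T x = P (Q (T x)) := (hTfix x).symm
      rw [this]
      exact hPm (le_trans (hQr _) (hTr x))
    have hTleQ : ∀ x, T x ≤ Q x := by
      intro x
      calc T x = Q (T x) := (hQfix x).symm
        _ ≤ Q x := hQm (hTr x)
    have hTP : T ∘ P = T := by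
      funext x
      exact le_antisymm (hTm (hPr x)) (by
        have := hTm (hTleP x)
        rwa [show T (T x) = T x from congrFun hTi x] at this)
    have hTQ : T ∘ Q = T := by
      funext x
      exact le_antisymm (hTm (hQr x)) (by
        have := hTm (hTleQ x)
        rwa [show T (T x) = T x from congrFun hTi x] at this)
    refine ⟨T, ⟨hTr, hTm, hTi⟩, ⟨funext hPfix, hTP⟩, ⟨funext hQfix, hTQ⟩, ?_⟩
    rintro U ⟨hUr, hUm, hUi⟩ ⟨hPU, hUP⟩ ⟨hQU, hUQ⟩
    constructor
    · -- T ∘ U = U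
      funext x
      show T (U x) = U x
      have hfU : f (U x) = U x := by
        show P (Q (U x)) = U x
        have h2 : Q (U x) = U x := congrFun hQU x
        have h3 : P (U x) = U x := congrFun hPU x
        rw [h2, h3]
      have : ∀ m, f^[m] (U x) = U x := by
        intro m
        induction m with
        | zero => rfl
        | succ m ih => rw [Function.iterate_succ_apply', ih, hfU]
      exact this n
    · -- U ∘ T = U
      funext x
      show U (T x) = U x
      have hUf : ∀ y, U (f y) = U y := by
        intro y
        show U (P (Q y)) = U y
        have h2 : U (P (Q y)) = U (Q y) := congrFun hUP (Q y)
        have h3 : U (Q y) = U y := congrFun hUQ y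
        exact h2.trans h3
      have : ∀ m, U (f^[m] x) = U x := by
        intro m
        induction m with
        | zero => rfl
        | succ m ih =>
          rw [Function.iterate_succ_apply']
          rw [hUf (f^[m] x)]
          exact ih
      exact this n
end

section
/- Let K be a finite poset and P ∈ Or(K) idempotent. Then for all x, y ∈ im(P) with x ≤ y, μ_{im(P)}(x, y) = Σ_{z ∈ [x,y], P(z) = x} μ_K(z, y), where μ denotes the Möbius function. -/
open Finset

section Aux

variable {K : Type*} [PartialOrder K] [Fintype K]

open scoped Classical

/-- auxiliary sum -/
noncomputable def ff (P : K → K) (μK : K → K → ℤ) (x w : K) : ℤ :=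
  ∑ z ∈ Finset.univ.filter (fun z => x ≤ z ∧ z ≤ w ∧ P z = x), μK z w

theorem L1 (μK : K → K → ℤ) (hμK1 : ∀ x : K, μK x x = 1)
    (hμK2 : ∀ x y : K, x < y →
      μK x y = -∑ z ∈ Finset.univ.filter (fun z => x ≤ z ∧ z < y), μK x z)
    {x y : K} (hxy : x ≤ y) :
    ∑ z ∈ Finset.univ.filter (fun z => x ≤ z ∧ z ≤ y), μK x z = if x = y then 1 else 0 := by
  rcases eq_or_lt_of_le hxy with rfl | hlt
  · have hf : Finset.univ.filter (fun z : K => x ≤ z ∧ z ≤ x) = {x} := by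
      ext z
      simp only [mem_filter, mem_univ, true_and, mem_singleton]
      constructor
      · rintro ⟨h1, h2⟩; exact le_antisymm h2 h1
      · rintro rfl; exact ⟨le_rfl, le_rfl⟩
    rw [hf]
    simp [hμK1]
  · have hne : x ≠ y := ne_of_lt hlt
    have hf : Finset.univ.filter (fun z => x ≤ z ∧ z ≤ y)
        = insert y (Finset.univ.filter (fun z => x ≤ z ∧ z < y)) := by
      ext z
      simp only [mem_filter, mem_univ, true_and, mem_insert]
      constructor
      · rintro ⟨h1, h2⟩
        rcases h2.lt_or_eq with h | h
        · exact Or.inr ⟨h1, h⟩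
        · exact Or.inl h
      · rintro (rfl | ⟨h1, h2⟩)
        · exact ⟨hxy, le_rfl⟩
        · exact ⟨h1, h2.le⟩
    rw [hf, Finset.sum_insert (by simp), hμK2 x y hlt, if_neg hne]
    ring

theorem ff_zero (P : K → K) (μK : K → K → ℤ) {x u : K} (h : ¬ x ≤ u) :
    ff P μK x u = 0 := by
  unfold ff
  have : Finset.univ.filter (fun z => x ≤ z ∧ z ≤ u ∧ P z = x) = ∅ := by
    ext z
    simp only [mem_filter, mem_univ, true_and, notMem_empty, iff_false, not_and]
    intro h1 h2
    exact absurd (h1.trans h2) h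
  rw [this, Finset.sum_empty]

theorem sumI' (P : K → K) (μK : K → K → ℤ) (hμK1 : ∀ x : K, μK x x = 1)
    (hμK2 : ∀ x y : K, x < y →
      μK x y = -∑ z ∈ Finset.univ.filter (fun z => x ≤ z ∧ z < y), μK x z)
    {x y : K} (hxy : x ≤ y) :
    ∑ w ∈ Finset.univ.filter (fun w => w ≤ y), ff P μK x w = if P y = x then 1 else 0 := by
  unfold ff
  have step1 : ∑ w ∈ Finset.univ.filter (fun w => w ≤ y),
        ∑ z ∈ Finset.univ.filter (fun z => x ≤ z ∧ z ≤ w ∧ P z = x), μK z w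
      = ∑ w ∈ Finset.univ, ∑ z ∈ Finset.univ,
          if w ≤ y ∧ x ≤ z ∧ z ≤ w ∧ P z = x then μK z w else 0 := by
    rw [Finset.sum_filter]
    refine Finset.sum_congr rfl fun w _ => ?_
    by_cases hw : w ≤ y
    · rw [if_pos hw, Finset.sum_filter]
      refine Finset.sum_congr rfl fun z _ => ?_
      simp [hw]
    · simp [hw]
  rw [step1, Finset.sum_comm]
  have step3 : ∀ z : K, (∑ w ∈ Finset.univ,
        if w ≤ y ∧ x ≤ z ∧ z ≤ w ∧ P z = x then μK z w else 0)
      = if z = y ∧ x ≤ z ∧ P z = x then 1 else 0 := by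
    intro z
    by_cases hz : x ≤ z ∧ P z = x
    · have heq : (∑ w ∈ Finset.univ,
          if w ≤ y ∧ x ≤ z ∧ z ≤ w ∧ P z = x then μK z w else 0)
          = ∑ w ∈ Finset.univ.filter (fun w => z ≤ w ∧ w ≤ y), μK z w := by
        rw [Finset.sum_filter]
        refine Finset.sum_congr rfl fun w _ => ?_
        by_cases h : z ≤ w ∧ w ≤ y
        · simp [h.1, h.2, hz.1, hz.2]
        · rw [if_neg h, if_neg]
          rintro ⟨h1, _, h2, _⟩
          exact h ⟨h2, h1⟩
      by_cases hzy : z ≤ y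
      · rw [heq, L1 μK hμK1 hμK2 hzy]
        by_cases hzey : z = y
        · subst hzey; simp [hz.1, hz.2]
        · simp [hzey]
      · have hempty : Finset.univ.filter (fun w => z ≤ w ∧ w ≤ y) = ∅ := by
          ext w
          simp only [mem_filter, mem_univ, true_and, notMem_empty, iff_false, not_and]
          intro h1 h2
          exact absurd (h1.trans h2) hzy
        rw [heq, hempty, Finset.sum_empty]
        have : z ≠ y := fun h => hzy (h ▸ le_rfl)
        simp [this]
    · rw [if_neg (fun h => hz ⟨h.2.1, h.2.2⟩)]
      refine Finset.sum_eq_zero fun w _ => ?_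
      rw [if_neg]
      rintro ⟨_, h1, _, h2⟩
      exact hz ⟨h1, h2⟩
  rw [Finset.sum_congr rfl (fun z _ => step3 z)]
  have step4 : ∀ z : K, (if z = y ∧ x ≤ z ∧ P z = x then (1:ℤ) else 0)
      = if z = y then (if P y = x then (1:ℤ) else 0) else 0 := by
    intro z
    by_cases h : z = y
    · subst h; simp [hxy]
    · simp [h]
  rw [Finset.sum_congr rfl (fun z _ => step4 z),
    Finset.sum_ite_eq' Finset.univ y (fun _ => if P y = x then (1:ℤ) else 0)]
  simp

theorem keyQ (P : K → K) (hreg : ∀ x, P x ≤ x) (hmono : Monotone P) (hidem : P ∘ P = P)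
    (μK : K → K → ℤ) (hμK1 : ∀ x : K, μK x x = 1)
    (hμK2 : ∀ x y : K, x < y →
      μK x y = -∑ z ∈ Finset.univ.filter (fun z => x ≤ z ∧ z < y), μK x z)
    {x : K} (hx : P x = x) :
    ∀ w : K, x ≤ w →
      (P w ≠ w → ff P μK x w = 0) ∧
      (P w = w → (∑ u ∈ Finset.univ.filter (fun u => P u = u ∧ x ≤ u ∧ u ≤ w), ff P μK x u)
        = if x = w then 1 else 0) := by
  have hPP : ∀ a, P (P a) = P a := fun a => congrFun hidem a
  intro w
  induction w using WellFoundedLT.induction with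
  | _ w IH =>
  intro hxw
  constructor
  · intro hw
    have hvw : P w < w := lt_of_le_of_ne (hreg w) hw
    have hxv : x ≤ P w := by rw [← hx]; exact hmono hxw
    have h1 : ∑ u ∈ Finset.univ.filter (fun u => u ≤ w), ff P μK x u
        = if P w = x then 1 else 0 := sumI' P μK hμK1 hμK2 hxw
    have hsplit : Finset.univ.filter (fun u : K => u ≤ w)
        = insert w (Finset.univ.filter (fun u : K => u < w)) := by
      ext u
      simp only [mem_filter, mem_univ, true_and, mem_insert]
      constructor
      · intro h
        rcases h.lt_or_eq with h' | h'
        · exact Or.inr h'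
        · exact Or.inl h'
      · rintro (rfl | h)
        exacts [le_rfl, h.le]
    rw [hsplit, Finset.sum_insert (by simp)] at h1
    have h2 : ∑ u ∈ Finset.univ.filter (fun u : K => u < w), ff P μK x u
        = ∑ u ∈ Finset.univ.filter (fun u => P u = u ∧ x ≤ u ∧ u ≤ P w), ff P μK x u := by
      symm
      apply Finset.sum_subset
      · intro u hu
        simp only [mem_filter, mem_univ, true_and] at hu ⊢
        exact lt_of_le_of_lt hu.2.2 hvw
      · intro u hu hnu
        simp only [mem_filter, mem_univ, true_and] at hu hnu
        by_cases hxu : x ≤ u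
        · by_cases hPu : P u = u
          · exact absurd ⟨hPu, hxu, by rw [← hPu]; exact hmono hu.le⟩ hnu
          · exact (IH u hu hxu).1 hPu
        · exact ff_zero P μK hxu
    have h3 := (IH (P w) hvw hxv).2 (hPP w)
    rw [h2, h3] at h1
    have hne : (if x = P w then (1:ℤ) else 0) = if P w = x then 1 else 0 := by
      by_cases hc : x = P w
      · rw [if_pos hc, if_pos hc.symm]
      · rw [if_neg hc, if_neg (fun h => hc h.symm)]
    rw [hne] at h1
    linarith
  · intro hw
    have hsub : Finset.univ.filter (fun u => P u = u ∧ x ≤ u ∧ u ≤ w)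
        ⊆ Finset.univ.filter (fun u : K => u ≤ w) := by
      intro u hu
      simp only [mem_filter, mem_univ, true_and] at hu ⊢
      exact hu.2.2
    have hz' : ∀ u ∈ Finset.univ.filter (fun u : K => u ≤ w),
        u ∉ Finset.univ.filter (fun u => P u = u ∧ x ≤ u ∧ u ≤ w) → ff P μK x u = 0 := by
      intro u hu hnu
      simp only [mem_filter, mem_univ, true_and] at hu hnu
      by_cases hxu : x ≤ u
      · have hPu : P u ≠ u := fun h => hnu ⟨h, hxu, hu⟩
        have hlt : u < w := lt_of_le_of_ne hu (fun h => hPu (h ▸ hw))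
        exact (IH u hlt hxu).1 hPu
      · exact ff_zero P μK hxu
    rw [Finset.sum_subset hsub hz', sumI' P μK hμK1 hμK2 hxw]
    by_cases hc : x = w
    · subst hc; simp [hw, hx]
    · have : P w ≠ x := fun h => hc (h.symm.trans hw)
      simp [hc, this]

end Aux

open scoped Classical in
/-- For an idempotent `P ∈ Or(K)` on a finite poset `K`, with `μK` the
Möbius function of `K` and `μI` the Möbius function of the induced subposet `im(P)`,
`μI x y = ∑_{z ∈ [x,y], P z = x} μK z y` for all `x ≤ y` in `im(P)`. -/
theorem stmt_5 {K : Type*} [PartialOrder K] [Fintype K]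
    (P : K → K) (hreg : ∀ x, P x ≤ x) (hmono : Monotone P) (hidem : P ∘ P = P)
    (μK : K → K → ℤ)
    (hμK1 : ∀ x : K, μK x x = 1)
    (hμK2 : ∀ x y : K, x < y →
      μK x y = -∑ z ∈ Finset.univ.filter (fun z => x ≤ z ∧ z < y), μK x z)
    (hμK3 : ∀ x y : K, ¬ x ≤ y → μK x y = 0)
    (μI : K → K → ℤ)
    (hμI1 : ∀ x ∈ Set.range P, μI x x = 1)
    (hμI2 : ∀ x ∈ Set.range P, ∀ y ∈ Set.range P, x < y →
      μI x y = -∑ z ∈ Finset.univ.filter (fun z => z ∈ Set.range P ∧ x ≤ z ∧ z < y),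
        μI x z)
    (hμI3 : ∀ x ∈ Set.range P, ∀ y ∈ Set.range P, ¬ x ≤ y → μI x y = 0) :
    ∀ x ∈ Set.range P, ∀ y ∈ Set.range P, x ≤ y →
      μI x y = ∑ z ∈ Finset.univ.filter (fun z => x ≤ z ∧ z ≤ y ∧ P z = x), μK z y := by
  classical
  intro x hx y hy hxy
  have hPP : ∀ a, P (P a) = P a := fun a => congrFun hidem a
  have hfix : ∀ a, a ∈ Set.range P → P a = a := by rintro a ⟨b, rfl⟩; exact hPP b
  have hx' := hfix x hx
  have hy' := hfix y hy
  have main : ∀ y : K, P y = y → x ≤ y → μI x y = ff P μK x y := by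
    intro y
    induction y using WellFoundedLT.induction with
    | _ y IH =>
    intro hy' hxy
    rcases eq_or_lt_of_le hxy with rfl | hlt
    · rw [hμI1 x hx]
      have hsing : Finset.univ.filter (fun z => x ≤ z ∧ z ≤ x ∧ P z = x) = {x} := by
        ext z
        simp only [Finset.mem_filter, Finset.mem_univ, true_and, Finset.mem_singleton]
        constructor
        · rintro ⟨h1, h2, _⟩; exact le_antisymm h2 h1
        · rintro rfl; exact ⟨le_rfl, le_rfl, hx'⟩
      unfold ff
      rw [hsing, Finset.sum_singleton, hμK1]
    · rw [hμI2 x hx y ⟨y, hy'⟩ hlt]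
      have hfe : Finset.univ.filter (fun z => z ∈ Set.range P ∧ x ≤ z ∧ z < y)
          = Finset.univ.filter (fun z => P z = z ∧ x ≤ z ∧ z < y) := by
        ext z
        simp only [Finset.mem_filter, Finset.mem_univ, true_and]
        constructor
        · rintro ⟨hz, h⟩; exact ⟨hfix z hz, h⟩
        · rintro ⟨hz, h⟩; exact ⟨⟨z, hz⟩, h⟩
      have hc : ∑ z ∈ Finset.univ.filter (fun z => z ∈ Set.range P ∧ x ≤ z ∧ z < y), μI x z
          = ∑ z ∈ Finset.univ.filter (fun z => P z = z ∧ x ≤ z ∧ z < y), ff P μK x z := by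
        rw [hfe]
        refine Finset.sum_congr rfl fun z hz => ?_
        simp only [Finset.mem_filter, Finset.mem_univ, true_and] at hz
        exact IH z hz.2.2 hz.1 hz.2.1
      rw [hc]
      have hH := (keyQ P hreg hmono hidem μK hμK1 hμK2 hx' y hxy).2 hy'
      have hsplit : Finset.univ.filter (fun u => P u = u ∧ x ≤ u ∧ u ≤ y)
          = insert y (Finset.univ.filter (fun u => P u = u ∧ x ≤ u ∧ u < y)) := by
        ext u
        simp only [Finset.mem_filter, Finset.mem_univ, true_and, Finset.mem_insert]
        constructor
        · rintro ⟨h1, h2, h3⟩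
          rcases h3.lt_or_eq with h | h
          · exact Or.inr ⟨h1, h2, h⟩
          · exact Or.inl h
        · rintro (rfl | ⟨h1, h2, h3⟩)
          · exact ⟨hy', hxy, le_rfl⟩
          · exact ⟨h1, h2, h3.le⟩
      rw [hsplit, Finset.sum_insert (by simp), if_neg (ne_of_lt hlt)] at hH
      linarith
  have := main y hy' hxy
  unfold ff at this
  convert this using 2
end

section
/- Let K be a finite Eulerian poset with rank function ρ and P ∈ Or(K) a projection. Then for x, y ∈ im(P) with x ≤ y: μ_{im(P)}(x,y) = (-1)^{ρ(y)-ρ(x)} if the interval [x,y] of K is contained in im(P), and μ_{im(P)}(x,y) = 0 otherwise. -/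
open Finset

section AuxStmt6
variable {K : Type*} [PartialOrder K] [Fintype K]

open scoped Classical

theorem aux_smono (ρ : K → ℕ) (hρ : ∀ x y : K, x ⋖ y → ρ y = ρ x + 1) :
    ∀ y x : K, x < y → ρ x < ρ y := by
  have wf : WellFounded ((· < ·) : K → K → Prop) := IsWellFounded.wf
  intro y
  refine wf.induction (C := fun y => ∀ x, x < y → ρ x < ρ y) y ?_
  intro y IH x hxy
  obtain ⟨t, ht, hmax⟩ := (Finset.univ.filter (fun t => x ≤ t ∧ t < y)).exists_maximal
    ⟨x, by simp [hxy, le_refl]⟩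
  simp only [mem_filter, mem_univ, true_and] at ht
  have hcov : t ⋖ y := by
    refine ⟨ht.2, fun s h1 h2 => ?_⟩
    exact lt_irrefl _ (lt_of_lt_of_le h1 (hmax (by simp [le_trans ht.1 h1.le, h2]) h1.le))
  have hty : ρ y = ρ t + 1 := hρ _ _ hcov
  rcases eq_or_lt_of_le ht.1 with rfl | hlt
  · omega
  · have := IH t ht.2 x hlt; omega

variable (Q : K → Prop) (μ : K → K → ℤ) (F G : K → K → Finset K)

theorem auxA
    (hF : ∀ a b z : K, z ∈ F a b ↔ Q z ∧ a ≤ z ∧ z ≤ b)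
    (hG : ∀ a b z : K, z ∈ G a b ↔ Q z ∧ a ≤ z ∧ z < b)
    (h1 : ∀ x, Q x → μ x x = 1)
    (h2 : ∀ x y, Q x → Q y → x < y → μ x y = -∑ z ∈ G x y, μ x z)
    {x y : K} (hx : Q x) (hy : Q y) (hxy : x ≤ y) :
    ∑ z ∈ F x y, μ x z = if x = y then 1 else 0 := by
  rcases eq_or_lt_of_le hxy with rfl | hlt
  · have hs : F x x = {x} := by
      ext z
      simp only [hF, mem_singleton]
      constructor
      · rintro ⟨_, h1, h2⟩; exact le_antisymm h2 h1
      · rintro rfl; exact ⟨hx, le_refl _, le_refl _⟩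
    rw [hs, Finset.sum_singleton, h1 x hx, if_pos rfl]
  · rw [if_neg (ne_of_lt hlt)]
    have hsplit : F x y = insert y (G x y) := by
      ext z
      simp only [hF, hG, mem_insert]
      constructor
      · rintro ⟨hq, hxz, hzy⟩
        rcases eq_or_lt_of_le hzy with rfl | h
        · exact Or.inl rfl
        · exact Or.inr ⟨hq, hxz, h⟩
      · rintro (rfl | ⟨hq, hxz, h⟩)
        · exact ⟨hy, hlt.le, le_refl _⟩
        · exact ⟨hq, hxz, h.le⟩
    have hynot : y ∉ G x y := by
      intro h
      exact absurd ((hG x y y).mp h).2.2 (lt_irrefl y)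
    rw [hsplit, Finset.sum_insert hynot, h2 x y hx hy hlt]
    ring

theorem auxB (ρ : K → ℕ) (hsm : ∀ y x : K, x < y → ρ x < ρ y)
    (hF : ∀ a b z : K, z ∈ F a b ↔ Q z ∧ a ≤ z ∧ z ≤ b)
    (hG : ∀ a b z : K, z ∈ G a b ↔ Q z ∧ a ≤ z ∧ z < b)
    (h1 : ∀ x, Q x → μ x x = 1)
    (h2 : ∀ x y, Q x → Q y → x < y → μ x y = -∑ z ∈ G x y, μ x z) :
    ∀ (x y : K), Q x → Q y → x ≤ y →
    ∑ z ∈ F x y, μ z y = if x = y then 1 else 0 := by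
  suffices H : ∀ n : ℕ, ∀ x y : K, ρ y - ρ x < n → Q x → Q y → x ≤ y →
      ∑ z ∈ F x y, μ z y = if x = y then 1 else 0 by
    intro x y hx hy hxy
    exact H (ρ y - ρ x + 1) x y (Nat.lt_succ_self _) hx hy hxy
  intro n
  induction n with
  | zero => intro x y h; omega
  | succ n IH =>
    intro x y hn hx hy hxy
    rcases eq_or_lt_of_le hxy with rfl | hlt
    · have hs : F x x = {x} := by
        ext z
        simp only [hF, mem_singleton]
        constructor
        · rintro ⟨_, h1, h2⟩; exact le_antisymm h2 h1
        · rintro rfl; exact ⟨hx, le_refl _, le_refl _⟩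
      rw [hs, Finset.sum_singleton, h1 x hx, if_pos rfl]
    · rw [if_neg (ne_of_lt hlt)]
      have key : ∑ v ∈ F x y, (∑ w ∈ F v y, μ v w)
          = ∑ w ∈ F x y, (∑ v ∈ F x w, μ v w) := by
        refine Finset.sum_comm' ?_
        intro v w
        simp only [hF]
        constructor
        · rintro ⟨⟨qv, xv, vy⟩, ⟨qw, vw, wy⟩⟩
          exact ⟨⟨qv, xv, vw⟩, ⟨qw, le_trans xv vw, wy⟩⟩
        · rintro ⟨⟨qv, xv, vw⟩, ⟨qw, xw, wy⟩⟩
          exact ⟨⟨qv, xv, le_trans vw wy⟩, ⟨qw, vw, wy⟩⟩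
      have lhs1 : ∑ v ∈ F x y, (∑ w ∈ F v y, μ v w) = 1 := by
        have hterm : ∀ v ∈ F x y, (∑ w ∈ F v y, μ v w) = if v = y then 1 else 0 := by
          intro v hv
          rw [hF] at hv
          exact auxA Q μ F G hF hG h1 h2 hv.1 hy hv.2.2
        rw [Finset.sum_congr rfl hterm, Finset.sum_ite_eq']
        rw [if_pos ((hF x y y).mpr ⟨hy, hxy, le_refl _⟩)]
      have total : ∑ w ∈ F x y, (∑ v ∈ F x w, μ v w) = 1 := by
        rw [← key]; exact lhs1
      have hsplit : F x y = insert y (G x y) := by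
        ext z
        simp only [hF, hG, mem_insert]
        constructor
        · rintro ⟨hq, hxz, hzy⟩
          rcases eq_or_lt_of_le hzy with rfl | h
          · exact Or.inl rfl
          · exact Or.inr ⟨hq, hxz, h⟩
        · rintro (rfl | ⟨hq, hxz, h⟩)
          · exact ⟨hy, hlt.le, le_refl _⟩
          · exact ⟨hq, hxz, h.le⟩
      have hynot : y ∉ G x y := by
        intro h
        exact absurd ((hG x y y).mp h).2.2 (lt_irrefl y)
      rw [hsplit, Finset.sum_insert hynot] at total
      have rest : ∑ w ∈ G x y, (∑ v ∈ F x w, μ v w) = 1 := by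
        have hterm : ∀ w ∈ G x y, (∑ v ∈ F x w, μ v w) = if x = w then 1 else 0 := by
          intro w hw
          rw [hG] at hw
          have hρw : ρ w - ρ x < n := by
            have h1' : ρ w < ρ y := hsm y w hw.2.2
            have h2' : ρ x ≤ ρ w := by
              rcases eq_or_lt_of_le hw.2.1 with rfl | h
              · exact le_refl _
              · exact (hsm w x h).le
            omega
          exact IH x w hρw hx hw.1 hw.2.1
        rw [Finset.sum_congr rfl hterm, Finset.sum_ite_eq]
        rw [if_pos ((hG x y x).mpr ⟨hx, le_refl _, hlt⟩)]
      rw [rest] at total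
      linarith [total]

theorem auxC
    (hF : ∀ a b z : K, z ∈ F a b ↔ Q z ∧ a ≤ z ∧ z ≤ b)
    (hG : ∀ a b z : K, z ∈ G a b ↔ Q z ∧ a ≤ z ∧ z < b)
    (h1 : ∀ x, Q x → μ x x = 1)
    (h2 : ∀ x y, Q x → Q y → x < y → μ x y = -∑ z ∈ G x y, μ x z)
    (y : K) (hy : Q y) (h : K → ℤ)
    (hid : ∀ w, Q w → w ≤ y → ∑ v ∈ F w y, h v = if w = y then 1 else 0)
    (x : K) (hx : Q x) (hxy : x ≤ y) : μ x y = h x := by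
  have step1 : μ x y = ∑ u ∈ F x y, μ x u * (if u = y then 1 else 0) := by
    have heq : ∀ u : K, μ x u * (if u = y then 1 else 0) = if u = y then μ x u else 0 := by
      intro u; split <;> ring
    rw [Finset.sum_congr rfl (fun u _ => heq u), Finset.sum_ite_eq',
      if_pos ((hF x y y).mpr ⟨hy, hxy, le_refl _⟩)]
  rw [step1]
  have step2 : ∀ u ∈ F x y,
      μ x u * (if u = y then 1 else 0) = ∑ v ∈ F u y, μ x u * h v := by
    intro u hu
    rw [hF] at hu
    rw [← Finset.mul_sum, hid u hu.1 hu.2.2]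
  rw [Finset.sum_congr rfl step2]
  have swap : ∑ u ∈ F x y, ∑ v ∈ F u y, μ x u * h v
      = ∑ v ∈ F x y, ∑ u ∈ F x v, μ x u * h v := by
    refine Finset.sum_comm' ?_
    intro u v
    simp only [hF]
    constructor
    · rintro ⟨⟨qu, xu, uy⟩, ⟨qv, uv, vy⟩⟩
      exact ⟨⟨qu, xu, uv⟩, ⟨qv, le_trans xu uv, vy⟩⟩
    · rintro ⟨⟨qu, xu, uv⟩, ⟨qv, xv, vy⟩⟩
      exact ⟨⟨qu, xu, le_trans uv vy⟩, ⟨qv, uv, vy⟩⟩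
  rw [swap]
  have step3 : ∀ v ∈ F x y,
      (∑ u ∈ F x v, μ x u * h v) = if x = v then h v else 0 := by
    intro v hv
    rw [hF] at hv
    rw [← Finset.sum_mul, auxA Q μ F G hF hG h1 h2 hx hv.1 hv.2.1]
    split <;> ring
  rw [Finset.sum_congr rfl step3, Finset.sum_ite_eq,
    if_pos ((hF x y x).mpr ⟨hx, le_refl _, hxy⟩)]

theorem aux_fiber (ρ : K → ℕ) (hρ : ∀ x y : K, x ⋖ y → ρ y = ρ x + 1)
    (hsm : ∀ y x : K, x < y → ρ x < ρ y)
    (F : K → K → Finset K)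
    (hFm : ∀ a b z : K, z ∈ F a b ↔ a ≤ z ∧ z ≤ b)
    (hbal : ∀ u z : K, u < z → ∑ v ∈ F u z, ((-1 : ℤ)) ^ (ρ v - ρ u) = 0)
    (P : K → K) (hreg : ∀ x, P x ≤ x) (hmono : Monotone P)
    (hfix : ∀ v : K, v ∈ Set.range P ↔ P v = v)
    (hproj : ∀ x ∈ Set.range P, ∀ y ∈ Set.range P, x ≤ y →
      ∃ a b : K, {z : K | x ≤ z ∧ z ≤ y ∧ P z = x} = Set.Icc a b)
    (x y : K) (hx : x ∈ Set.range P) (hy : y ∈ Set.range P)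
    (hnot : ¬ Set.Icc x y ⊆ Set.range P) :
    ∃ z : K, x ≤ z ∧ z ≤ y ∧ P z = x ∧ z ≠ x := by
  obtain ⟨z0, hz0m, hz0n⟩ := Set.not_subset.mp hnot
  have hz0 : P z0 ≠ z0 := fun h => hz0n ((hfix z0).mpr h)
  obtain ⟨z, hzmem, hzmin⟩ := (Finset.univ.filter
      (fun v => (x ≤ v ∧ v ≤ y) ∧ P v ≠ v)).exists_minimal
    ⟨z0, by simp [hz0m.1, hz0m.2, hz0]⟩
  simp only [mem_filter, mem_univ, true_and] at hzmem
  obtain ⟨⟨hxz, hzy⟩, hPz⟩ := hzmem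
  have hminimal : ∀ v : K, x ≤ v → v ≤ y → v < z → P v = v := by
    intro v h1 h2 h3
    by_contra hne
    exact lt_irrefl _ (lt_of_le_of_lt (hzmin (by simp [h1, h2, hne]) h3.le) h3)
  set w := P z with hw
  have hwz : w < z := lt_of_le_of_ne (hreg z) hPz
  have hxw : x ≤ w := by
    have := hmono hxz
    rwa [(hfix x).mp hx] at this
  rcases eq_or_lt_of_le hxw with heq | hlt
  · exact ⟨z, hxz, hzy, heq.symm, fun h => hPz (heq.symm.trans h.symm)⟩
  · exfalso
    have hwrange : w ∈ Set.range P := ⟨z, rfl⟩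
    have hwy : w ≤ y := le_trans hwz.le hzy
    have hcov1 : w ⋖ z := by
      refine ⟨hwz, fun s h1 h2 => ?_⟩
      have hsy : s ≤ y := le_trans h2.le hzy
      have hxs : x ≤ s := le_trans hxw h1.le
      have hPs : P s = s := hminimal s hxs hsy h2
      obtain ⟨a, c, hac⟩ := hproj w hwrange y hy hwy
      have hwmem : w ∈ Set.Icc a c := by
        rw [← hac]; exact ⟨le_refl _, hwy, (hfix w).mp hwrange⟩
      have hzmem' : z ∈ Set.Icc a c := by
        rw [← hac]; exact ⟨hwz.le, hzy, rfl⟩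
      have hsmem : s ∈ Set.Icc a c := ⟨le_trans hwmem.1 h1.le, le_trans h2.le hzmem'.2⟩
      rw [← hac] at hsmem
      have hsw : s = w := by rw [← hsmem.2.2, hPs]
      exact absurd h1 (by rw [hsw]; exact lt_irrefl _)
    have hEx : ∃ u : K, x ≤ u ∧ u ⋖ w := by
      obtain ⟨t, ht, hmax⟩ := (Finset.univ.filter (fun t => x ≤ t ∧ t < w)).exists_maximal
        ⟨x, by simp [hlt, le_refl]⟩
      simp only [mem_filter, mem_univ, true_and] at ht
      exact ⟨t, ht.1, ht.2, fun s h1 h2 => lt_irrefl _ (lt_of_lt_of_le h1 (hmax (by simp [le_trans ht.1 h1.le, h2]) h1.le))⟩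
    obtain ⟨u, hxu, hcov2⟩ := hEx
    have hρz : ρ z = ρ u + 2 := by
      rw [hρ _ _ hcov1, hρ _ _ hcov2]
    have hρw : ρ w = ρ u + 1 := hρ _ _ hcov2
    have huz : u < z := lt_trans hcov2.1 hwz
    have hBal := hbal u z huz
    set M := (F u z).filter (fun v => v ≠ u ∧ v ≠ z) with hM
    have hrkM : ∀ v ∈ M, ρ v = ρ u + 1 := by
      intro v hv
      simp only [hM, mem_filter, hFm] at hv
      obtain ⟨⟨huv, hvz⟩, hvu, hvz'⟩ := hv
      have h1 : ρ u < ρ v := hsm v u (lt_of_le_of_ne huv (Ne.symm hvu))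
      have h2 : ρ v < ρ z := hsm z v (lt_of_le_of_ne hvz hvz')
      omega
    have hFsplit : F u z = insert u (insert z M) := by
      ext v
      simp only [hFm, hM, mem_filter, mem_insert]
      constructor
      · rintro ⟨huv, hvz⟩
        by_cases h1 : v = u
        · exact Or.inl h1
        by_cases h2 : v = z
        · exact Or.inr (Or.inl h2)
        exact Or.inr (Or.inr ⟨⟨huv, hvz⟩, h1, h2⟩)
      · rintro (rfl | rfl | ⟨⟨h1, h2⟩, _⟩)
        · exact ⟨le_refl _, huz.le⟩
        · exact ⟨huz.le, le_refl _⟩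
        · exact ⟨h1, h2⟩
    have huM : u ∉ insert z M := by
      intro hmem
      rcases Finset.mem_insert.mp hmem with h | h
      · exact absurd h (ne_of_lt huz)
      · exact (Finset.mem_filter.mp h).2.1 rfl
    have hzM : z ∉ M := fun h => (Finset.mem_filter.mp h).2.2 rfl
    rw [hFsplit, Finset.sum_insert huM, Finset.sum_insert hzM] at hBal
    have hMsum : ∑ v ∈ M, ((-1 : ℤ)) ^ (ρ v - ρ u) = -(M.card : ℤ) := by
      rw [Finset.sum_congr rfl (fun v hv => by rw [hrkM v hv]; norm_num : ∀ v ∈ M,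
        ((-1 : ℤ)) ^ (ρ v - ρ u) = -1)]
      simp [Finset.sum_const]
    rw [hMsum] at hBal
    have hself : ρ u - ρ u = 0 := by omega
    have hz2 : ρ z - ρ u = 2 := by omega
    rw [hself, hz2] at hBal
    norm_num at hBal
    have hcard : M.card = 2 := by
      have h2 : (M.card : ℤ) = 2 := by linarith [hBal]
      exact_mod_cast h2
    have hwM : w ∈ M := by
      rw [hM, Finset.mem_filter, hFm]
      exact ⟨⟨hcov2.1.le, hwz.le⟩, ne_of_gt hcov2.1, ne_of_lt hwz⟩
    obtain ⟨t, htM⟩ : (M.erase w).Nonempty := by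
      rw [← Finset.card_pos, Finset.card_erase_of_mem hwM, hcard]
      norm_num
    have htw : t ≠ w := (Finset.mem_erase.mp htM).1
    have htM' : t ∈ M := (Finset.mem_erase.mp htM).2
    have htM'' := htM'
    simp only [hM, mem_filter, hFm] at htM''
    obtain ⟨⟨hut, htz⟩, htu, htz'⟩ := htM''
    have htltz : t < z := lt_of_le_of_ne htz htz'
    have hPt : P t = t := hminimal t (le_trans hxu hut) (le_trans htz hzy) htltz
    have htlew : t ≤ w := by
      have := hmono htz
      rwa [hPt] at this
    have hρt : ρ t = ρ w := by
      rw [hρw]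
      exact hrkM t htM'
    rcases eq_or_lt_of_le htlew with h | h
    · exact htw h
    · exact absurd (hsm w t h) (by omega)

end AuxStmt6

open scoped Classical in
/-- For a projection `P ∈ Or(K)` of a finite Eulerian poset `K` with rank
function `ρ`, the Möbius function of the induced subposet `im(P)` satisfies
`μI x y = (-1)^(ρ y - ρ x)` if `[x,y] ⊆ im(P)`, and `μI x y = 0` otherwise. -/
theorem stmt_6 {K : Type*} [PartialOrder K] [Fintype K] [OrderBot K] [OrderTop K]
    (ρ : K → ℕ) (hρbot : ρ ⊥ = 0) (hρ : ∀ x y : K, x ⋖ y → ρ y = ρ x + 1)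
    (μK : K → K → ℤ)
    (hμK1 : ∀ x : K, μK x x = 1)
    (hμK2 : ∀ x y : K, x < y →
      μK x y = -∑ z ∈ Finset.univ.filter (fun z => x ≤ z ∧ z < y), μK x z)
    (hμK3 : ∀ x y : K, ¬ x ≤ y → μK x y = 0)
    (hEuler : ∀ x y : K, x ≤ y → μK x y = (-1) ^ (ρ y - ρ x))
    (P : K → K) (hreg : ∀ x, P x ≤ x) (hmono : Monotone P) (hidem : P ∘ P = P)
    (hproj : ∀ x ∈ Set.range P, ∀ y ∈ Set.range P, x ≤ y →
      ∃ a b : K, {z : K | x ≤ z ∧ z ≤ y ∧ P z = x} = Set.Icc a b)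
    (μI : K → K → ℤ)
    (hμI1 : ∀ x ∈ Set.range P, μI x x = 1)
    (hμI2 : ∀ x ∈ Set.range P, ∀ y ∈ Set.range P, x < y →
      μI x y = -∑ z ∈ Finset.univ.filter (fun z => z ∈ Set.range P ∧ x ≤ z ∧ z < y),
        μI x z)
    (hμI3 : ∀ x ∈ Set.range P, ∀ y ∈ Set.range P, ¬ x ≤ y → μI x y = 0) :
    ∀ x ∈ Set.range P, ∀ y ∈ Set.range P, x ≤ y →
      μI x y = if Set.Icc x y ⊆ Set.range P then (-1) ^ (ρ y - ρ x) else 0 := by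
  intro x hx y hy hxy
  have hfix : ∀ v : K, v ∈ Set.range P ↔ P v = v := by
    intro v
    constructor
    · rintro ⟨u, rfl⟩
      calc P (P u) = (P ∘ P) u := rfl
        _ = P u := by rw [hidem]
    · intro h; exact ⟨v, h⟩
  have hsm : ∀ y x : K, x < y → ρ x < ρ y := aux_smono ρ hρ
  have hmono' : ∀ a b : K, a ≤ b → ρ a ≤ ρ b := by
    intro a b h
    rcases eq_or_lt_of_le h with rfl | h'
    · exact le_refl _
    · exact (hsm b a h').le
  -- K-instantiation with trivial predicate
  have hFK : ∀ a b z : K, z ∈ Finset.univ.filter (fun z => a ≤ z ∧ z ≤ b)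
      ↔ (fun _ : K => True) z ∧ a ≤ z ∧ z ≤ b := by
    intro a b z; simp [mem_filter]
  have hGK : ∀ a b z : K, z ∈ Finset.univ.filter (fun z => a ≤ z ∧ z < b)
      ↔ (fun _ : K => True) z ∧ a ≤ z ∧ z < b := by
    intro a b z; simp [mem_filter]
  have hK1 : ∀ x : K, (fun _ : K => True) x → μK x x = 1 := fun x _ => hμK1 x
  have hK2 : ∀ a b : K, (fun _ : K => True) a → (fun _ : K => True) b → a < b →
      μK a b = -∑ z ∈ Finset.univ.filter (fun z => a ≤ z ∧ z < b), μK a z :=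
    fun a b _ _ h => hμK2 a b h
  have AK : ∀ u v : K, u ≤ v →
      ∑ z ∈ Finset.univ.filter (fun z => u ≤ z ∧ z ≤ v), μK u z
        = if u = v then 1 else 0 :=
    fun u v h => auxA (fun _ => True) μK _ _ hFK hGK hK1 hK2 trivial trivial h
  have BK : ∀ u v : K, u ≤ v →
      ∑ z ∈ Finset.univ.filter (fun z => u ≤ z ∧ z ≤ v), μK z v
        = if u = v then 1 else 0 :=
    fun u v h => auxB (fun _ => True) μK _ _ ρ hsm hFK hGK hK1 hK2 u v trivial trivial h
  -- balance property of Eulerian intervals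
  have hbal : ∀ u z : K, u < z →
      ∑ v ∈ Finset.univ.filter (fun v => u ≤ v ∧ v ≤ z), ((-1 : ℤ)) ^ (ρ v - ρ u) = 0 := by
    intro u z h
    have hA := AK u z h.le
    rw [if_neg (ne_of_lt h)] at hA
    rw [← hA]
    apply Finset.sum_congr rfl
    intro v hv
    simp only [mem_filter, mem_univ, true_and] at hv
    rw [hEuler u v hv.1]
  -- μI instantiation
  have hFI : ∀ a b z : K, z ∈ Finset.univ.filter
      (fun z => z ∈ Set.range P ∧ a ≤ z ∧ z ≤ b)
      ↔ z ∈ Set.range P ∧ a ≤ z ∧ z ≤ b := by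
    intro a b z; simp [mem_filter]
  have hGI : ∀ a b z : K, z ∈ Finset.univ.filter
      (fun z => z ∈ Set.range P ∧ a ≤ z ∧ z < b)
      ↔ z ∈ Set.range P ∧ a ≤ z ∧ z < b := by
    intro a b z; simp [mem_filter]
  have hI2 : ∀ a b : K, a ∈ Set.range P → b ∈ Set.range P → a < b →
      μI a b = -∑ z ∈ Finset.univ.filter
        (fun z => z ∈ Set.range P ∧ a ≤ z ∧ z < b), μI a z :=
    fun a b ha hb h => hμI2 a ha b hb h
  -- the fiber-sum function
  have hid : ∀ w : K, w ∈ Set.range P → w ≤ y →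
      ∑ v ∈ Finset.univ.filter (fun v => v ∈ Set.range P ∧ w ≤ v ∧ v ≤ y),
        (∑ z ∈ Finset.univ.filter (fun z => P z = v ∧ z ≤ y), μK z y)
        = if w = y then 1 else 0 := by
    intro w hw hwy
    have hmaps : ∀ z ∈ Finset.univ.filter (fun z => w ≤ z ∧ z ≤ y),
        P z ∈ Finset.univ.filter (fun v => v ∈ Set.range P ∧ w ≤ v ∧ v ≤ y) := by
      intro z hz
      simp only [mem_filter, mem_univ, true_and] at hz ⊢
      refine ⟨⟨z, rfl⟩, ?_, le_trans (hreg z) hz.2⟩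
      calc w = P w := ((hfix w).mp hw).symm
        _ ≤ P z := hmono hz.1
    have hfib := Finset.sum_fiberwise_of_maps_to hmaps (fun z => μK z y)
    have hinner : ∀ v ∈ Finset.univ.filter (fun v => v ∈ Set.range P ∧ w ≤ v ∧ v ≤ y),
        (Finset.univ.filter (fun z => w ≤ z ∧ z ≤ y)).filter (fun z => P z = v)
          = Finset.univ.filter (fun z => P z = v ∧ z ≤ y) := by
      intro v hv
      simp only [mem_filter, mem_univ, true_and] at hv
      ext z
      simp only [mem_filter, mem_univ, true_and]
      constructor
      · rintro ⟨⟨h1, h2⟩, h3⟩; exact ⟨h3, h2⟩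
      · rintro ⟨h1, h2⟩
        exact ⟨⟨le_trans hv.2.1 (h1 ▸ hreg z), h2⟩, h1⟩
    calc ∑ v ∈ Finset.univ.filter (fun v => v ∈ Set.range P ∧ w ≤ v ∧ v ≤ y),
          (∑ z ∈ Finset.univ.filter (fun z => P z = v ∧ z ≤ y), μK z y)
        = ∑ v ∈ Finset.univ.filter (fun v => v ∈ Set.range P ∧ w ≤ v ∧ v ≤ y),
          ∑ z ∈ (Finset.univ.filter (fun z => w ≤ z ∧ z ≤ y)).filter (fun z => P z = v),
            μK z y := by
          refine Finset.sum_congr rfl ?_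
          intro v hv
          rw [hinner v hv]
      _ = ∑ z ∈ Finset.univ.filter (fun z => w ≤ z ∧ z ≤ y), μK z y := hfib
      _ = if w = y then 1 else 0 := BK w y hwy
  have hC : μI x y = ∑ z ∈ Finset.univ.filter (fun z => P z = x ∧ z ≤ y), μK z y :=
    auxC (fun v => v ∈ Set.range P) μI _ _ hFI hGI hμI1 hI2 y hy
      (fun v => ∑ z ∈ Finset.univ.filter (fun z => P z = v ∧ z ≤ y), μK z y)
      hid x hx hxy
  -- the fiber of x over [x,y] is an interval [x,b]
  obtain ⟨a, b, hab⟩ := hproj x hx y hy hxy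
  have hxmem : x ∈ Set.Icc a b := by
    rw [← hab]; exact ⟨le_refl _, hxy, (hfix x).mp hx⟩
  have hax : a = x := by
    have hamem : a ∈ Set.Icc a b := ⟨le_refl _, le_trans hxmem.1 hxmem.2⟩
    rw [← hab] at hamem
    exact le_antisymm hxmem.1 hamem.1
  rw [hax] at hab
  have hxmem' : x ∈ Set.Icc x b := by
    rw [← hab]; exact ⟨le_refl _, hxy, (hfix x).mp hx⟩
  have hxb : x ≤ b := hxmem'.2
  have hbmem : b ∈ {z : K | x ≤ z ∧ z ≤ y ∧ P z = x} := by
    rw [hab]; exact ⟨hxb, le_refl _⟩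
  obtain ⟨_, hby, hPb⟩ := hbmem
  -- compute the fiber sum
  have hfilt : Finset.univ.filter (fun z => P z = x ∧ z ≤ y)
      = Finset.univ.filter (fun z => x ≤ z ∧ z ≤ b) := by
    ext z
    simp only [mem_filter, mem_univ, true_and]
    constructor
    · rintro ⟨h1, h2⟩
      have hmem : z ∈ Set.Icc x b := by
        rw [← hab]; exact ⟨h1 ▸ hreg z, h2, h1⟩
      exact ⟨hmem.1, hmem.2⟩
    · rintro ⟨h1, h2⟩
      have hmem : z ∈ {z : K | x ≤ z ∧ z ≤ y ∧ P z = x} := by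
        rw [hab]; exact ⟨h1, h2⟩
      exact ⟨hmem.2.2, hmem.2.1⟩
  have hval : ∑ z ∈ Finset.univ.filter (fun z => P z = x ∧ z ≤ y), μK z y
      = (-1 : ℤ) ^ (ρ y - ρ x) * (if x = b then 1 else 0) := by
    rw [hfilt]
    have hterm : ∀ z ∈ Finset.univ.filter (fun z => x ≤ z ∧ z ≤ b),
        μK z y = (-1 : ℤ) ^ (ρ y - ρ x) * (-1 : ℤ) ^ (ρ z - ρ x) := by
      intro z hz
      simp only [mem_filter, mem_univ, true_and] at hz
      have hzy' : z ≤ y := le_trans hz.2 hby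
      rw [hEuler z y hzy']
      have e1 : ρ x ≤ ρ z := hmono' x z hz.1
      have e2 : ρ z ≤ ρ y := hmono' z y hzy'
      have hsq : ((-1 : ℤ)) ^ (ρ z - ρ x) * ((-1 : ℤ)) ^ (ρ z - ρ x) = 1 := by
        rw [← pow_add, ← two_mul, pow_mul]
        norm_num
      calc (-1 : ℤ) ^ (ρ y - ρ z) = (-1 : ℤ) ^ (ρ y - ρ z) * 1 := by ring
        _ = (-1 : ℤ) ^ (ρ y - ρ z) * ((-1 : ℤ) ^ (ρ z - ρ x) * (-1 : ℤ) ^ (ρ z - ρ x)) := by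
            rw [hsq]
        _ = ((-1 : ℤ) ^ (ρ y - ρ z) * (-1 : ℤ) ^ (ρ z - ρ x)) * (-1 : ℤ) ^ (ρ z - ρ x) := by
            ring
        _ = (-1 : ℤ) ^ (ρ y - ρ x) * (-1 : ℤ) ^ (ρ z - ρ x) := by
            rw [← pow_add, show (ρ y - ρ z) + (ρ z - ρ x) = ρ y - ρ x from by omega]
    rw [Finset.sum_congr rfl hterm, ← Finset.mul_sum]
    congr 1
    have hA := AK x b hxb
    rw [← hA]
    refine Finset.sum_congr rfl ?_
    intro z hz
    simp only [mem_filter, mem_univ, true_and] at hz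
    rw [hEuler x z hz.1]
  rw [hC, hval]
  by_cases hsub : Set.Icc x y ⊆ Set.range P
  · rw [if_pos hsub]
    have hbrange : b ∈ Set.range P := hsub ⟨hxb, hby⟩
    have hxb' : x = b := hPb.symm.trans ((hfix b).mp hbrange)
    rw [if_pos hxb', mul_one]
  · rw [if_neg hsub]
    obtain ⟨z, h1, h2, h3, h4⟩ :=
      aux_fiber ρ hρ hsm _ (fun u z v => by simp [mem_filter]) hbal
        P hreg hmono hfix hproj x y hx hy hsub
    have hzb : z ∈ Set.Icc x b := by
      rw [← hab]; exact ⟨h1, h2, h3⟩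
    have hxbne : x ≠ b := by
      rintro rfl
      exact h4 (le_antisymm hzb.2 hzb.1)
    rw [if_neg hxbne, mul_zero]
end

section
/- Let K be a finite Eulerian poset, P ∈ Or(K) a projection, and A := P^{-1}(0̂) ∩ atom(K). Then P^{-1}(0̂) = K_A, where K_A = {x ∈ K : every atom a ≤ x belongs to A}. -/
open scoped Classical in
/-- For a projection `P ∈ Or(K)` of a finite Eulerian poset `K`, with
`A := P⁻¹(⊥) ∩ atom(K)`, one has `P⁻¹(⊥) = K_A`, where
`K_A = {x : every atom below x lies in A}`. -/
theorem stmt_7 {K : Type*} [PartialOrder K] [Fintype K] [OrderBot K] [OrderTop K]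
    (ρ : K → ℕ) (hρbot : ρ ⊥ = 0) (hρ : ∀ x y : K, x ⋖ y → ρ y = ρ x + 1)
    (μK : K → K → ℤ)
    (hμK1 : ∀ x : K, μK x x = 1)
    (hμK2 : ∀ x y : K, x < y →
      μK x y = -∑ z ∈ Finset.univ.filter (fun z => x ≤ z ∧ z < y), μK x z)
    (hμK3 : ∀ x y : K, ¬ x ≤ y → μK x y = 0)
    (hEuler : ∀ x y : K, x ≤ y → μK x y = (-1) ^ (ρ y - ρ x))
    (P : K → K) (hreg : ∀ x, P x ≤ x) (hmono : Monotone P) (hidem : P ∘ P = P)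
    (hproj : ∀ x ∈ Set.range P, ∀ y ∈ Set.range P, x ≤ y →
      ∃ a b : K, {z : K | x ≤ z ∧ z ≤ y ∧ P z = x} = Set.Icc a b)
    (A : Set K) (hA : A = {a : K | P a = ⊥ ∧ ⊥ ⋖ a}) :
    {x : K | P x = ⊥} = {x : K | ∀ a : K, ⊥ ⋖ a → a ≤ x → a ∈ A} := by
  have hPbot : P ⊥ = ⊥ := le_bot_iff.mp (hreg ⊥)
  -- Euler sum identity
  have hsum : ∀ y : K, ⊥ < y →
      ∑ z ∈ Finset.univ.filter (fun z => z ≤ y), ((-1 : ℤ)) ^ (ρ z) = 0 := by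
    intro y hy
    have he : ∀ z : K, μK ⊥ z = (-1) ^ (ρ z) := by
      intro z
      have := hEuler ⊥ z bot_le
      rwa [hρbot, Nat.sub_zero] at this
    have h2 := hμK2 ⊥ y hy
    rw [he y] at h2
    have h3 : ∑ z ∈ Finset.univ.filter (fun z : K => ⊥ ≤ z ∧ z < y), μK ⊥ z
        = ∑ z ∈ Finset.univ.filter (fun z : K => z < y), (-1 : ℤ) ^ (ρ z) := by
      apply Finset.sum_congr
      · ext z; simp
      · intro z _; exact he z
    rw [h3] at h2
    have hsplit : Finset.univ.filter (fun z : K => z ≤ y)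
        = insert y (Finset.univ.filter (fun z : K => z < y)) := by
      ext z
      simp [le_iff_lt_or_eq, or_comm]
    rw [hsplit, Finset.sum_insert (by simp)]
    rw [h2]; ring
  -- main hard direction, by well-founded induction
  have main : ∀ x : K, (∀ a : K, ⊥ ⋖ a → a ≤ x → a ∈ A) → P x = ⊥ := by
    intro x
    induction x using WellFoundedLT.induction with
    | _ x IH =>
    intro hx
    by_contra hPx
    have hPPx : P (P x) = P x := congrFun hidem x
    have hwx : P x = x := by
      rcases lt_or_eq_of_le (hreg x) with h | h
      · exfalso
        have := IH (P x) h (fun a ha hax => hx a ha (hax.trans (hreg x)))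
        rw [hPPx] at this
        exact hPx this
      · exact h
    have hbotx : ⊥ < x := by
      rcases eq_or_lt_of_le (bot_le : (⊥ : K) ≤ x) with h | h
      · exfalso; exact hPx (by rw [← h, hPbot])
      · exact h
    have hIz : ∀ z : K, z < x → P z = ⊥ := by
      intro z hz
      exact IH z hz (fun a ha haz => hx a ha (haz.trans hz.le))
    obtain ⟨a, b, hab⟩ := hproj ⊥ ⟨⊥, hPbot⟩ x ⟨x, hwx⟩ bot_le
    have hset : {z : K | ⊥ ≤ z ∧ z ≤ x ∧ P z = ⊥} = Set.Iio x := by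
      ext z
      simp only [Set.mem_setOf_eq, Set.mem_Iio]
      constructor
      · rintro ⟨-, hz1, hz2⟩
        rcases lt_or_eq_of_le hz1 with h | h
        · exact h
        · exfalso; exact hPx (h ▸ hz2)
      · intro h; exact ⟨bot_le, h.le, hIz z h⟩
    rw [hset] at hab
    have ha0 : a = ⊥ := by
      have : (⊥ : K) ∈ Set.Icc a b := by rw [← hab]; exact hbotx
      exact le_bot_iff.mp this.1
    have hIic : Set.Iio x = Set.Iic b := by rw [hab, ha0, Set.Icc_bot]
    rcases eq_or_lt_of_le (bot_le : (⊥ : K) ≤ b) with hb | hb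
    · -- b = ⊥ : x is an atom
      have hcov : ⊥ ⋖ x := by
        refine ⟨hbotx, fun c hc1 hc2 => ?_⟩
        have : c ∈ Set.Iic b := hIic ▸ (hc2 : c ∈ Set.Iio x)
        have : c ≤ ⊥ := by rw [hb]; exact this
        exact absurd (le_bot_iff.mp this) hc1.ne'
      have : x ∈ A := hx x hcov le_rfl
      rw [hA] at this
      exact hPx this.1
    · -- ⊥ < b : Euler characteristic contradiction
      have h1 := hsum x hbotx
      have h2 := hsum b hb
      have hfilter : Finset.univ.filter (fun z : K => z < x)
          = Finset.univ.filter (fun z : K => z ≤ b) := by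
        ext z
        simp only [Finset.mem_filter, Finset.mem_univ, true_and]
        constructor
        · intro h
          have hz : z ∈ Set.Iio x := h
          rw [hIic] at hz
          exact hz
        · intro h
          have hz : z ∈ Set.Iic b := h
          rw [← hIic] at hz
          exact hz
      have hsplit : Finset.univ.filter (fun z : K => z ≤ x)
          = insert x (Finset.univ.filter (fun z : K => z < x)) := by
        ext z
        simp [le_iff_lt_or_eq, or_comm]
      rw [hsplit, Finset.sum_insert (by simp), hfilter, h2, add_zero] at h1
      exact absurd h1 (pow_ne_zero _ (by norm_num))
  ext x
  simp only [Set.mem_setOf_eq]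
  constructor
  · intro hx a ha hax
    have h1 : P a ≤ P x := hmono hax
    rw [hx, le_bot_iff] at h1
    rw [hA]
    exact ⟨h1, ha⟩
  · exact main x
end

section
/- Let K be a finite poset, P ∈ Or(K) idempotent, and u, v ∈ K \ im(P) with u ≤ v. Then the interval [u,v] of K is contained in K \ im(P) if and only if u is not strictly below P(v). -/
/-- Let `P ∈ Or(K)` be idempotent and `u, v ∈ K \ im(P)` with `u ≤ v`.
Then `[u,v] ⊆ K \ im(P)` iff `u` is not strictly below `P v`. -/
theorem stmt_8 {K : Type*} [PartialOrder K] [Fintype K]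
    (P : K → K) (hreg : ∀ x, P x ≤ x) (hmono : Monotone P) (hidem : P ∘ P = P)
    (u v : K) (hu : u ∉ Set.range P) (hv : v ∉ Set.range P) (huv : u ≤ v) :
    Set.Icc u v ⊆ (Set.range P)ᶜ ↔ ¬ u < P v := by
  constructor
  · intro h hlt
    exact h ⟨hlt.le, hreg v⟩ ⟨v, rfl⟩
  · intro h x hx ⟨y, hy⟩
    have hxP : P x = x := by
      rw [← hy, ← Function.comp_apply (f := P), hidem]
    have hle : x ≤ P v := hxP ▸ hmono hx.2
    have hne : u ≠ P v := fun e => hu ⟨v, e.symm⟩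
    exact h (lt_of_le_of_ne (hx.1.trans hle) hne)
end

section
/- A matching M of a finite graded poset K is a special matching if and only if it satisfies the lifting property: for all u ≤ v with u ⋖ M(u) and M(v) ⋖ v, one has M(u) ≤ v and u ≤ M(v). -/
section Aux

variable {K : Type*} [PartialOrder K] [Fintype K]

private lemma rho_strictMono (ρ : K → ℕ) (hρ : ∀ x y : K, x ⋖ y → ρ y = ρ x + 1) :
    ∀ x y : K, x < y → ρ x < ρ y := by
  have hwf : WellFoundedLT K := inferInstance
  intro x y
  induction y using WellFoundedLT.induction with
  | _ y IH =>
    intro hxy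
    obtain ⟨z, hxz, hzy⟩ := exists_le_covBy_of_lt hxy
    have h2 := hρ z y hzy
    rcases eq_or_lt_of_le hxz with rfl | hlt
    · omega
    · have := IH z hzy.lt hlt
      omega

end Aux

/-- A matching `M` of a finite graded poset `K` is a special matching iff
it satisfies the lifting property: for all `u ≤ v` with `u ⋖ M u` and `M v ⋖ v`, one
has `M u ≤ v` and `u ≤ M v`. -/
theorem stmt_9 {K : Type*} [PartialOrder K] [Fintype K] [OrderBot K] [OrderTop K]
    (ρ : K → ℕ) (hρbot : ρ ⊥ = 0) (hρ : ∀ x y : K, x ⋖ y → ρ y = ρ x + 1)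
    (M : K → K) (hinv : ∀ x, M (M x) = x) (hmatch : ∀ x, M x ⋖ x ∨ x ⋖ M x) :
    (∀ x y : K, x ⋖ y → x ≠ M y → M x ≤ M y) ↔
    (∀ u v : K, u ≤ v → u ⋖ M u → M v ⋖ v → M u ≤ v ∧ u ≤ M v) := by
  have hmono : ∀ x y : K, x < y → ρ x < ρ y := rho_strictMono ρ hρ
  have hlemono : ∀ x y : K, x ≤ y → ρ x ≤ ρ y := by
    intro x y h
    rcases eq_or_lt_of_le h with rfl | h
    · exact le_rfl
    · exact (hmono x y h).le
  constructor
  · intro hsp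
    -- prove lifting by strong induction on ρ v - ρ u
    have main : ∀ n : ℕ, ∀ u v : K, u ≤ v → ρ v ≤ ρ u + n → u ⋖ M u → M v ⋖ v →
        M u ≤ v ∧ u ≤ M v := by
      intro n
      induction n with
      | zero =>
        intro u v huv hr hu hv
        rcases eq_or_lt_of_le huv with rfl | hlt
        · have h1 := hρ u (M u) hu
          have h2 := hρ (M u) u hv
          omega
        · exact absurd (hmono u v hlt) (by omega)
      | succ n IH =>
        intro u v huv hr hu hv
        rcases eq_or_lt_of_le huv with rfl | hlt
        · have h1 := hρ u (M u) hu
          have h2 := hρ (M u) u hv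
          omega
        -- find z with u ⋖ z ≤ v
        obtain ⟨z, huz, hzv⟩ := exists_covBy_le_of_lt hlt
        have hMuv : M u ≤ v := by
          by_cases hz : z = M u
          · exact hz ▸ hzv
          · have huMz : u ≠ M z := fun h => hz (by rw [h, hinv])
            have hspz := hsp u z huz huMz
            rcases hmatch z with hzc | hzc
            · -- M z ⋖ z : contradiction by ranks
              exfalso
              have h1 := hρ u (M u) hu
              have h2 := hρ (M z) z hzc
              have h3 := hρ u z huz
              have h4 := hlemono _ _ hspz
              omega
            · have h3 := hρ u z huz
              have := IH z v hzv (by omega) hzc hv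
              exact hspz.trans this.1
        constructor
        · exact hMuv
        · -- find w with u ≤ w ⋖ v
          obtain ⟨w, huw, hwv⟩ := exists_le_covBy_of_lt hlt
          by_cases hw : w = M v
          · exact hw ▸ huw
          · have hspw := hsp w v hwv hw
            rcases hmatch w with hwc | hwc
            · have h3 := hρ w v hwv
              have := IH u w huw (by omega) hu hwc
              exact this.2.trans hspw
            · exfalso
              have h1 := hρ w (M w) hwc
              have h2 := hρ (M v) v hv
              have h3 := hρ w v hwv
              have h4 := hlemono _ _ hspw
              omega
    intro u v huv hu hv
    exact main (ρ v - ρ u) u v huv (by omega) hu hv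
  · intro hlift x y hxy hne
    rcases hmatch x with hx | hx
    · rcases hmatch y with hy | hy
      · exact (hlift (M x) y (hx.le.trans hxy.le) (by rw [hinv]; exact hx) hy).2
      · exact (hx.le.trans hxy.le).trans hy.le
    · rcases hmatch y with hy | hy
      · -- x ⋖ M x, M y ⋖ y : show impossible except M x = y
        have h := hlift x y hxy.le hx hy
        have h1 := hρ x (M x) hx
        have h2 := hρ (M y) y hy
        have h3 := hρ x y hxy
        -- M x ≤ y with ρ (M x) = ρ y forces M x = y
        have : M x = y := by
          rcases eq_or_lt_of_le h.1 with he | hl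
          · exact he
          · exact absurd (hmono _ _ hl) (by omega)
        exact absurd (by rw [← this, hinv]) hne
      · exact (hlift x (M y) (hxy.le.trans hy.le) hx (by rw [hinv]; exact hy)).1
end

section
/- Let M be a special matching of a finite graded poset K. Define P^M(x) = x if x ⋖ M(x), and P^M(x) = M(x) if M(x) ⋖ x. Then P^M is an idempotent, regressive, order-preserving endomorphism of K. -/
/-- For a special matching `M` of a finite graded poset `K`, the map
`P^M` (with `P^M x = x` if `x ⋖ M x` and `P^M x = M x` if `M x ⋖ x`) is an idempotent,
regressive, order-preserving endomorphism of `K`. -/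
theorem stmt_10 {K : Type*} [PartialOrder K] [Fintype K] [OrderBot K] [OrderTop K]
    (ρ : K → ℕ) (hρbot : ρ ⊥ = 0) (hρ : ∀ x y : K, x ⋖ y → ρ y = ρ x + 1)
    (M : K → K) (hinv : ∀ x, M (M x) = x) (hmatch : ∀ x, M x ⋖ x ∨ x ⋖ M x)
    (hspecial : ∀ x y : K, x ⋖ y → x ≠ M y → M x ≤ M y)
    (PM : K → K)
    (hPM : ∀ x : K, (x ⋖ M x → PM x = x) ∧ (M x ⋖ x → PM x = M x)) :
    PM ∘ PM = PM ∧ (∀ x, PM x ≤ x) ∧ Monotone PM := by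
  classical
  -- regressive
  have hreg : ∀ x, PM x ≤ x := by
    intro x
    rcases hmatch x with h | h
    · rw [(hPM x).2 h]; exact h.le
    · rw [(hPM x).1 h]
  -- cover case of monotonicity
  have hcov : ∀ x y : K, x ⋖ y → PM x ≤ PM y := by
    intro x y h
    rcases hmatch y with hy | hy
    · rw [(hPM y).2 hy]
      by_cases hx : x = M y
      · subst hx
        have hxM : M y ⋖ M (M y) := by rw [hinv]; exact hy
        rw [(hPM (M y)).1 hxM]
      · have hMle : M x ≤ M y := hspecial x y h hx
        rcases hmatch x with hx' | hx'
        · rw [(hPM x).2 hx']; exact hMle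
        · rw [(hPM x).1 hx']; exact (lt_of_lt_of_le hx'.lt hMle).le
    · rw [(hPM y).1 hy]
      exact (hreg x).trans h.le
  -- full monotonicity by induction on rank
  have hmono : Monotone PM := by
    have key : ∀ n : ℕ, ∀ x y : K, ρ y ≤ n → x ≤ y → PM x ≤ PM y := by
      intro n
      induction n with
      | zero =>
        intro x y hn hxy
        rcases eq_or_lt_of_le hxy with rfl | hlt
        · exact le_rfl
        · -- y covers something above x, so ρ y ≥ 1, contradiction
          obtain ⟨z, hz⟩ : ∃ z, x ≤ z ∧ z ⋖ y := by
            obtain ⟨z, hz, hmax⟩ := Finset.exists_maximal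
              (s := Finset.univ.filter (fun z => x ≤ z ∧ z < y))
              ⟨x, by simp [hlt]⟩
            simp only [Finset.mem_filter] at hz hmax
            refine ⟨z, hz.2.1, hz.2.2, fun w hzw hwy => ?_⟩
            exact hzw.not_ge (hmax ⟨Finset.mem_univ w, hz.2.1.trans hzw.le, hwy⟩ hzw.le)
          have := hρ z y hz.2
          omega
      | succ n ih =>
        intro x y hn hxy
        rcases eq_or_lt_of_le hxy with rfl | hlt
        · exact le_rfl
        · obtain ⟨z, hxz, hzy⟩ : ∃ z, x ≤ z ∧ z ⋖ y := by
            obtain ⟨z, hz, hmax⟩ := Finset.exists_maximal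
              (s := Finset.univ.filter (fun z => x ≤ z ∧ z < y))
              ⟨x, by simp [hlt]⟩
            simp only [Finset.mem_filter] at hz hmax
            refine ⟨z, hz.2.1, hz.2.2, fun w hzw hwy => ?_⟩
            exact hzw.not_ge (hmax ⟨Finset.mem_univ w, hz.2.1.trans hzw.le, hwy⟩ hzw.le)
          have hρz : ρ y = ρ z + 1 := hρ z y hzy
          exact (ih x z (by omega) hxz).trans (hcov z y hzy)
    intro x y hxy
    exact key (ρ y) x y le_rfl hxy
  refine ⟨?_, hreg, hmono⟩
  funext x
  simp only [Function.comp_apply]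
  rcases hmatch x with h | h
  · rw [(hPM x).2 h]
    have : M x ⋖ M (M x) := by rw [hinv]; exact h
    exact (hPM (M x)).1 this
  · rw [(hPM x).1 h, (hPM x).1 h]
end

section
/- Let K₁ and K₂ be finite graded posets. Then M is a special matching of K₁ × K₂ if and only if M = N × id_{K₂} for some special matching N of K₁, or M = id_{K₁} × N for some special matching N of K₂. -/
/-- A special matching of a poset: an involution `M` such that each `x` is covered by
or covers `M x`, and `x ⋖ y`, `x ≠ M y` imply `M x ≤ M y`. -/
def IsSpecialMatching {K : Type*} [PartialOrder K] (M : K → K) : Prop :=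
  (∀ x, M (M x) = x) ∧ (∀ x, M x ⋖ x ∨ x ⋖ M x) ∧
    (∀ x y : K, x ⋖ y → x ≠ M y → M x ≤ M y)

section Aux

variable {K₁ K₂ : Type*} [PartialOrder K₁] [PartialOrder K₂]

/-- Transfer a special matching through `Prod.swap`. -/
lemma isSpecialMatching_swap (M : K₁ × K₂ → K₁ × K₂) (hM : IsSpecialMatching M) :
    IsSpecialMatching (fun p : K₂ × K₁ => (M p.swap).swap) := by
  obtain ⟨hinv, hcov, hsm3⟩ := hM
  refine ⟨fun p => ?_, fun p => ?_, fun p q hpq hne => ?_⟩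
  · simp [Prod.swap_swap, hinv]
  · rcases hcov p.swap with h | h
    · left
      have := Prod.swap_covBy_swap.2 h
      simpa using this
    · right
      have := Prod.swap_covBy_swap.2 h
      simpa using this
  · have h1 : p.swap ⋖ q.swap := by
      have := Prod.swap_covBy_swap.2 hpq
      simpa using this
    have h2 : p.swap ≠ M q.swap := by
      intro h
      apply hne
      simp [← h]
    have := hsm3 _ _ h1 h2
    simpa using Prod.swap_le_swap.2 this

/-- Easy direction: `N × id` is a special matching if `N` is. -/
lemma isSpecialMatching_prod (N : K₁ → K₁) (hN : IsSpecialMatching N) :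
    IsSpecialMatching (fun p : K₁ × K₂ => (N p.1, p.2)) := by
  obtain ⟨hinv, hcov, hsm3⟩ := hN
  refine ⟨fun p => ?_, fun p => ?_, fun p q hpq hne => ?_⟩
  · simp [hinv]
  · rcases hcov p.1 with h | h
    · left
      have : ((N p.1, p.2) : K₁ × K₂) ⋖ (p.1, p.2) := Prod.mk_covBy_mk_iff_left.2 h
      simpa using this
    · right
      have : ((p.1, p.2) : K₁ × K₂) ⋖ (N p.1, p.2) := Prod.mk_covBy_mk_iff_left.2 h
      simpa using this
  · rcases Prod.covBy_iff.1 hpq with ⟨h1, h2⟩ | ⟨h1, h2⟩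
    · have hne1 : p.1 ≠ N q.1 := by
        intro h
        apply hne
        exact Prod.ext h h2
      exact Prod.mk_le_mk.2 ⟨hsm3 _ _ h1 hne1, h2.le⟩
    · exact Prod.mk_le_mk.2 ⟨(congrArg N h2).le, h1.le⟩

/-- Key lemma: if a special matching of a product fixes the second coordinate of the
bottom element, then it is of the form `N × id`. -/
lemma key [Finite K₁] [Finite K₂] [OrderBot K₁] [OrderBot K₂]
    (M : K₁ × K₂ → K₁ × K₂) (hM : IsSpecialMatching M)
    (hbot : (M (⊥, ⊥)).2 = ⊥) :
    ∃ N : K₁ → K₁, IsSpecialMatching N ∧ M = fun p => (N p.1, p.2) := by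
  obtain ⟨hinv, hcov, hsm3⟩ := hM
  -- Claim A: M (x, ⊥) has second coordinate ⊥.
  have claimA : ∀ x : K₁, (M (x, ⊥)).2 = ⊥ := by
    intro x
    induction x using WellFoundedLT.induction with
    | _ x IH =>
    by_contra h
    rcases hcov (x, ⊥) with hd | hu
    · rcases Prod.covBy_iff.1 hd with ⟨_, h2⟩ | ⟨h1, _⟩
      · exact h h2
      · exact absurd h1.lt (not_lt_bot)
    · rcases Prod.covBy_iff.1 hu with ⟨_, h2⟩ | ⟨h1, h2⟩
      · exact h h2.symm
      · -- M (x, ⊥) = (x, b) with ⊥ ⋖ b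
        set b := (M (x, ⊥)).2 with hbdef
        have hMxb : M (x, ⊥) = (x, b) := Prod.ext h2.symm rfl
        have hxne : x ≠ ⊥ := by
          rintro rfl
          exact h hbot
        obtain ⟨x', _, hx'⟩ := exists_le_covBy_of_lt (bot_lt_iff_ne_bot.2 hxne)
        have hMxb' : M (x, b) = (x, ⊥) := by
          have := hinv (x, ⊥)
          rw [hMxb] at this
          exact this
        have hedge : ((x', b) : K₁ × K₂) ⋖ (x, b) := Prod.mk_covBy_mk_iff_left.2 hx'
        have hbne : b ≠ ⊥ := h
        have hne : ((x', b) : K₁ × K₂) ≠ M (x, b) := by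
          rw [hMxb']
          intro heq
          exact hbne (congrArg Prod.snd heq)
        have hle : M (x', b) ≤ M (x, b) := hsm3 _ _ hedge hne
        rw [hMxb'] at hle
        have hsnd : (M (x', b)).2 = ⊥ := le_bot_iff.1 hle.2
        rcases hcov (x', b) with hd' | hu'
        · rcases Prod.covBy_iff.1 hd' with ⟨_, h2'⟩ | ⟨_, h2'⟩
          · rw [hsnd] at h2'
            exact hbne h2'.symm
          · -- M (x', b) = (x', ⊥)
            have hMx'b : M (x', b) = (x', ⊥) := Prod.ext h2' hsnd
            have : M (x', ⊥) = (x', b) := by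
              have := hinv (x', b)
              rw [hMx'b] at this
              exact this
            have := IH x' hx'.lt
            rw [‹M (x', ⊥) = (x', b)›] at this
            exact hbne this
        · have hlt : ((x', b) : K₁ × K₂) < M (x', b) := hu'.lt
          have : b ≤ ⊥ := hsnd ▸ hlt.le.2
          exact hbne (le_bot_iff.1 this)
  set N : K₁ → K₁ := fun x => (M (x, ⊥)).1 with hNdef
  have hMN : ∀ x : K₁, M (x, ⊥) = (N x, ⊥) := fun x => Prod.ext rfl (claimA x)
  have Ninv : ∀ x, N (N x) = x := by
    intro x
    have := hinv (x, ⊥)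
    rw [hMN x, hMN (N x)] at this
    exact congrArg Prod.fst this
  have Ncov : ∀ x, N x ⋖ x ∨ x ⋖ N x := by
    intro x
    rcases hcov (x, ⊥) with hd | hu
    · rw [hMN x] at hd
      exact Or.inl (Prod.mk_covBy_mk_iff_left.1 hd)
    · rw [hMN x] at hu
      exact Or.inr (Prod.mk_covBy_mk_iff_left.1 hu)
  -- Claim B: M (x, y) = (N x, y) for all x, y.
  have claimB : ∀ y : K₂, ∀ x : K₁, M (x, y) = (N x, y) := by
    intro y
    induction y using WellFoundedLT.induction with
    | _ y IH =>
    intro x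
    rcases eq_or_ne y ⊥ with rfl | hy
    · exact hMN x
    obtain ⟨y', _, hy'⟩ := exists_le_covBy_of_lt (bot_lt_iff_ne_bot.2 hy)
    rcases Ncov x with hNd | hNu
    · -- N x ⋖ x : work with the matched pair at N x
      have h1 : M (N x, y') = (x, y') := by
        rw [IH y' hy'.lt (N x), Ninv]
      have hedge : ((N x, y') : K₁ × K₂) ⋖ (N x, y) := Prod.mk_covBy_mk_iff_right.2 hy'
      have hne : ((N x, y') : K₁ × K₂) ≠ M (N x, y) := by
        intro heq
        have : M (N x, y') = (N x, y) := by
          rw [heq, hinv]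
        rw [h1] at this
        exact hNd.ne (congrArg Prod.fst this).symm
      have hle : M (N x, y') ≤ M (N x, y) := hsm3 _ _ hedge hne
      rw [h1] at hle
      have hMNxy : M (N x, y) = (x, y) := by
        rcases hcov (N x, y) with hd | hu
        · exfalso
          rcases Prod.covBy_iff.1 hd with ⟨h1', h2'⟩ | ⟨h1', h2'⟩
          · exact absurd (hle.1.trans_lt h1'.lt) hNd.lt.not_gt
          · exact absurd (le_trans hle.1 h2'.le) hNd.lt.not_ge
        · rcases Prod.covBy_iff.1 hu with ⟨h1', h2'⟩ | ⟨h1', h2'⟩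
          · have hx1 : x = (M (N x, y)).1 :=
              eq_of_le_of_not_lt hle.1 (h1'.2 hNd.lt)
            exact Prod.ext hx1.symm h2'.symm
          · exact absurd (le_trans hle.1 h2'.ge) hNd.lt.not_ge
      have := hinv (N x, y)
      rw [hMNxy] at this
      exact this
    · -- x ⋖ N x
      have h1 : M (x, y') = (N x, y') := IH y' hy'.lt x
      have hedge : ((x, y') : K₁ × K₂) ⋖ (x, y) := Prod.mk_covBy_mk_iff_right.2 hy'
      have hne : ((x, y') : K₁ × K₂) ≠ M (x, y) := by
        intro heq
        have : M (x, y') = (x, y) := by rw [heq, hinv]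
        rw [h1] at this
        exact hNu.ne (show x = N x from (congrArg Prod.fst this).symm)
      have hle : M (x, y') ≤ M (x, y) := hsm3 _ _ hedge hne
      rw [h1] at hle
      rcases hcov (x, y) with hd | hu
      · exfalso
        rcases Prod.covBy_iff.1 hd with ⟨h1', h2'⟩ | ⟨h1', h2'⟩
        · exact absurd (hle.1.trans_lt h1'.lt) hNu.lt.not_gt
        · exact absurd (le_trans hle.1 h2'.le) hNu.lt.not_ge
      · rcases Prod.covBy_iff.1 hu with ⟨h1', h2'⟩ | ⟨h1', h2'⟩
        · have hx1 : N x = (M (x, y)).1 :=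
            eq_of_le_of_not_lt hle.1 (h1'.2 hNu.lt)
          exact Prod.ext hx1.symm h2'.symm
        · exact absurd (le_trans hle.1 h2'.ge) hNu.lt.not_ge
  refine ⟨N, ⟨Ninv, Ncov, fun x y hxy hne => ?_⟩, ?_⟩
  · have hedge : ((x, ⊥) : K₁ × K₂) ⋖ (y, ⊥) := Prod.mk_covBy_mk_iff_left.2 hxy
    have hne' : ((x, ⊥) : K₁ × K₂) ≠ M (y, ⊥) := by
      rw [hMN y]
      intro heq
      exact hne (congrArg Prod.fst heq)
    have := hsm3 _ _ hedge hne'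
    rw [hMN x, hMN y] at this
    exact this.1
  · funext p
    exact claimB p.2 p.1

end Aux

/-- `M` is a special matching of the product `K₁ × K₂` of finite graded
posets iff `M = N × id` for a special matching `N` of `K₁`, or `M = id × N` for a
special matching `N` of `K₂`. -/
theorem stmt_11 {K₁ K₂ : Type*} [PartialOrder K₁] [PartialOrder K₂]
    [Fintype K₁] [Fintype K₂] [OrderBot K₁] [OrderTop K₁] [OrderBot K₂] [OrderTop K₂]
    (ρ₁ : K₁ → ℕ) (hρ₁bot : ρ₁ ⊥ = 0) (hρ₁ : ∀ x y : K₁, x ⋖ y → ρ₁ y = ρ₁ x + 1)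
    (ρ₂ : K₂ → ℕ) (hρ₂bot : ρ₂ ⊥ = 0) (hρ₂ : ∀ x y : K₂, x ⋖ y → ρ₂ y = ρ₂ x + 1)
    (M : K₁ × K₂ → K₁ × K₂) :
    IsSpecialMatching M ↔
      ((∃ N : K₁ → K₁, IsSpecialMatching N ∧ M = fun p => (N p.1, p.2)) ∨
       (∃ N : K₂ → K₂, IsSpecialMatching N ∧ M = fun p => (p.1, N p.2))) := by
  constructor
  · intro hM
    have hbot : ((⊥, ⊥) : K₁ × K₂) ⋖ M (⊥, ⊥) := by
      rcases hM.2.1 (⊥, ⊥) with h | h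
      · have hb : ((⊥, ⊥) : K₁ × K₂) ≤ M (⊥, ⊥) := ⟨bot_le, bot_le⟩
        exact absurd h.lt hb.not_gt
      · exact h
    rcases Prod.covBy_iff.1 hbot with ⟨_, h2⟩ | ⟨_, h2⟩
    · left
      exact key M hM h2.symm
    · right
      obtain ⟨N, hN, hNeq⟩ := key (fun p : K₂ × K₁ => (M p.swap).swap)
        (isSpecialMatching_swap M hM) (by simpa using h2.symm)
      refine ⟨N, hN, ?_⟩
      funext p
      have h5 := congrFun hNeq p.swap
      simp only [Prod.swap_swap] at h5
      have h6 := congrArg Prod.swap h5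
      simpa using h6
  · rintro (⟨N, hN, rfl⟩ | ⟨N, hN, rfl⟩)
    · exact isSpecialMatching_prod N hN
    · have h := isSpecialMatching_swap (K₁ := K₂) (K₂ := K₁) _
        (isSpecialMatching_prod (K₂ := K₁) N hN)
      have he : (fun p : K₁ × K₂ => (p.1, N p.2)) =
          fun p : K₁ × K₂ => (((fun q : K₂ × K₁ => (N q.1, q.2)) p.swap)).swap := by
        funext p
        simp
      rw [he]
      exact h
end

section
/- Let n > 1 with prime factorization n = p₁^{k₁} ⋯ p_h^{k_h}, and let P_n be the poset of divisors of n ordered by divisibility. For each i with k_i odd, the map M_i(z) = z·p_i if v_{p_i}(z) is even and M_i(z) = z/p_i if v_{p_i}(z) is odd, is a special matching of P_n; moreover every special matching of P_n is of this form. -/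
/-- The poset of divisors of `n`, ordered by divisibility. -/
def DivisorPoset (n : ℕ) : Type := {d : ℕ // d ∣ n}

instance (n : ℕ) : PartialOrder (DivisorPoset n) where
  le a b := a.1 ∣ b.1
  le_refl a := dvd_refl _
  le_trans a b c hab hbc := dvd_trans hab hbc
  le_antisymm a b hab hba := Subtype.ext (Nat.dvd_antisymm hab hba)

namespace Aux

variable {n p q : ℕ}

lemma dp_le {a b : DivisorPoset n} : a ≤ b ↔ a.1 ∣ b.1 := Iff.rfl

lemma dp_pos (hn : 0 < n) (a : DivisorPoset n) : 0 < a.1 :=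
  Nat.pos_of_dvd_of_pos a.2 hn

lemma dp_lt {a b : DivisorPoset n} : a < b ↔ a.1 ∣ b.1 ∧ a.1 ≠ b.1 := by
  constructor
  · intro h
    exact ⟨dp_le.mp h.le, fun he => h.ne (Subtype.ext he)⟩
  · rintro ⟨hd, hne⟩
    exact lt_of_le_of_ne (dp_le.mpr hd) (fun he => hne (congrArg Subtype.val he))

lemma dp_covby (hn : 0 < n) {a b : DivisorPoset n} :
    a ⋖ b ↔ ∃ q, q.Prime ∧ b.1 = a.1 * q := by
  constructor
  · rintro ⟨hlt, hmax⟩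
    rw [dp_lt] at hlt
    obtain ⟨⟨m, hm⟩, hne⟩ := hlt
    have hm1 : m ≠ 1 := by rintro rfl; rw [mul_one] at hm; exact hne hm.symm
    obtain ⟨r, hr, hrm⟩ := Nat.exists_prime_and_dvd hm1
    have hdvd : a.1 * r ∣ b.1 := hm ▸ mul_dvd_mul_left a.1 hrm
    set c : DivisorPoset n := ⟨a.1 * r, dvd_trans hdvd b.2⟩ with hc
    have hac : a < c := by
      rw [dp_lt]
      refine ⟨dvd_mul_right _ _, ?_⟩
      have := dp_pos hn a
      show a.1 ≠ a.1 * r; nlinarith [hr.two_le]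
    have hcb : c = b := by
      by_contra hne2
      exact hmax hac (lt_of_le_of_ne (dp_le.mpr hdvd) hne2)
    exact ⟨r, hr, by rw [← hcb]⟩
  · rintro ⟨r, hr, hb⟩
    have ha := dp_pos hn a
    constructor
    · rw [dp_lt]
      refine ⟨⟨r, hb⟩, ?_⟩
      nlinarith [hr.two_le]
    · intro c hac hcb
      rw [dp_lt] at hac hcb
      obtain ⟨⟨m, hmc⟩, hne1⟩ := hac
      obtain ⟨hdvd, hne2⟩ := hcb
      rw [hmc, hb] at hdvd
      have hmr : m ∣ r := (mul_dvd_mul_iff_left ha.ne').mp hdvd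
      rcases (Nat.Prime.eq_one_or_self_of_dvd hr m hmr) with h1 | h1
      · exact hne1 (by rw [hmc, h1, mul_one])
      · exact hne2 (by rw [hmc, hb, h1])

lemma fact_mul_p (hp : p.Prime) {z : ℕ} (hz : z ≠ 0) :
    (z * p).factorization p = z.factorization p + 1 := by
  rw [Nat.factorization_mul hz hp.pos.ne', hp.factorization]
  simp

lemma fact_mul_ne (hq : q.Prime) (hqp : q ≠ p) {z : ℕ} (hz : z ≠ 0) :
    (z * q).factorization p = z.factorization p := by
  rw [Nat.factorization_mul hz hq.pos.ne', hq.factorization]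
  simp [Finsupp.single_apply, hqp]

lemma fact_div_p (hp : p.Prime) {z : ℕ} (hz : z ≠ 0) (hpz : p ∣ z) :
    (z / p).factorization p + 1 = z.factorization p := by
  have h0 : z / p ≠ 0 := (Nat.div_pos (Nat.le_of_dvd (Nat.pos_of_ne_zero hz) hpz) hp.pos).ne'
  have h := fact_mul_p hp h0
  rw [Nat.div_mul_cancel hpz] at h
  exact h.symm

lemma dvd_of_even (hn0 : n ≠ 0) (hp : p.Prime) (hodd : Odd (n.factorization p))
    {z : ℕ} (hz : z ∣ n) (heven : Even (z.factorization p)) : z * p ∣ n := by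
  have hz0 : z ≠ 0 := fun h => hn0 (by simpa [h] using hz)
  rw [← Nat.factorization_le_iff_dvd (mul_ne_zero hz0 hp.pos.ne') hn0, Finsupp.le_def]
  intro r
  have hle := (Nat.factorization_le_iff_dvd hz0 hn0).mpr hz
  rw [Finsupp.le_def] at hle
  rw [Nat.factorization_mul hz0 hp.pos.ne', hp.factorization, Finsupp.add_apply]
  by_cases hr : r = p
  · subst hr
    have h1 := hle r
    have h2 : z.factorization r ≠ n.factorization r := by
      intro h; rw [h] at heven; exact (Nat.not_even_iff_odd.mpr hodd).elim heven
    simp only [Finsupp.single_eq_same]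
    omega
  · simpa [Finsupp.single_apply, Ne.symm hr] using hle r



variable {n p : ℕ}

lemma p_dvd_of_odd (hp : p.Prime) {z : ℕ} (hz : z ≠ 0) (ho : Odd (z.factorization p)) :
    p ∣ z := by
  rw [hp.dvd_iff_one_le_factorization hz]
  rw [Nat.odd_iff] at ho
  omega

lemma backward (hn : 1 < n) (M : DivisorPoset n → DivisorPoset n)
    (hp : p.Prime) (hpn : p ∣ n) (hodd : Odd (n.factorization p))
    (hM : ∀ z : DivisorPoset n,
      (Even (z.1.factorization p) → (M z).1 = z.1 * p) ∧
      (Odd (z.1.factorization p) → (M z).1 = z.1 / p)) :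
    IsSpecialMatching M := by
  have hn0 : (0:ℕ) < n := by omega
  have hz0 : ∀ z : DivisorPoset n, z.1 ≠ 0 := fun z => (dp_pos hn0 z).ne'
  refine ⟨?_, ?_, ?_⟩
  · intro z
    apply Subtype.ext
    rcases Nat.even_or_odd (z.1.factorization p) with he | ho
    · have h1 := (hM z).1 he
      have hv : (M z).1.factorization p = z.1.factorization p + 1 := by
        rw [h1]; exact fact_mul_p hp (hz0 z)
      have ho2 : Odd ((M z).1.factorization p) := by
        rw [Nat.even_iff] at he; rw [Nat.odd_iff]; omega
      have h2 := (hM (M z)).2 ho2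
      rw [h2, h1, Nat.mul_div_cancel _ hp.pos]
    · have hpz : p ∣ z.1 := p_dvd_of_odd hp (hz0 z) ho
      have h1 := (hM z).2 ho
      have hv : (M z).1.factorization p + 1 = z.1.factorization p := by
        rw [h1]; exact fact_div_p hp (hz0 z) hpz
      have he2 : Even ((M z).1.factorization p) := by
        rw [Nat.odd_iff] at ho; rw [Nat.even_iff]; omega
      have h2 := (hM (M z)).1 he2
      rw [h2, h1, Nat.div_mul_cancel hpz]
  · intro z
    rcases Nat.even_or_odd (z.1.factorization p) with he | ho
    · right
      rw [dp_covby hn0]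
      exact ⟨p, hp, (hM z).1 he⟩
    · left
      rw [dp_covby hn0]
      exact ⟨p, hp, by
        rw [(hM z).2 ho, Nat.div_mul_cancel (p_dvd_of_odd hp (hz0 z) ho)]⟩
  · intro x y hcov hne
    obtain ⟨q, hq, hyx⟩ := (dp_covby hn0).mp hcov
    rw [dp_le]
    by_cases hqp : q = p
    · rw [hqp] at hyx hq
      have hvy : y.1.factorization p = x.1.factorization p + 1 := by
        rw [hyx]; exact fact_mul_p hq (hz0 x)
      rcases Nat.even_or_odd (x.1.factorization p) with he | ho
      · exfalso
        apply hne
        apply Subtype.ext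
        have hoy : Odd (y.1.factorization p) := by
          rw [Nat.even_iff] at he; rw [Nat.odd_iff]; omega
        have := (hM y).2 hoy
        rw [this, hyx, Nat.mul_div_cancel _ hp.pos]
      · have hey : Even (y.1.factorization p) := by
          rw [Nat.odd_iff] at ho; rw [Nat.even_iff]; omega
        rw [(hM x).2 ho, (hM y).1 hey, hyx, mul_assoc]
        exact dvd_trans (Nat.div_dvd_of_dvd (p_dvd_of_odd hp (hz0 x) ho))
          (dvd_mul_right x.1 (p * p))
    · have hvy : y.1.factorization p = x.1.factorization p := by
        rw [hyx]; exact fact_mul_ne hq hqp (hz0 x)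
      rcases Nat.even_or_odd (x.1.factorization p) with he | ho
      · rw [(hM x).1 he, (hM y).1 (hvy ▸ he), hyx]
        exact mul_dvd_mul_right (dvd_mul_right x.1 q) p
      · have hpx : p ∣ x.1 := p_dvd_of_odd hp (hz0 x) ho
        obtain ⟨c, hc⟩ := hpx
        rw [(hM x).2 ho, (hM y).2 (hvy ▸ ho), hyx, hc, Nat.mul_div_cancel_left c hp.pos,
          mul_assoc, Nat.mul_div_cancel_left (c * q) hp.pos]
        exact dvd_mul_right c q
  
end Aux

namespace Aux

lemma forward {n : ℕ} (hn : 1 < n) (M : DivisorPoset n → DivisorPoset n)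
    (hM : IsSpecialMatching M) :
    ∃ p : ℕ, p.Prime ∧ p ∣ n ∧ Odd (n.factorization p) ∧
      ∀ z : DivisorPoset n,
        (Even (z.1.factorization p) → (M z).1 = z.1 * p) ∧
        (Odd (z.1.factorization p) → (M z).1 = z.1 / p) := by
  obtain ⟨hinv, hcov, hax⟩ := hM
  have hn0 : (0:ℕ) < n := by omega
  have hz0 : ∀ z : DivisorPoset n, z.1 ≠ 0 := fun z => (dp_pos hn0 z).ne'
  set one : DivisorPoset n := ⟨1, one_dvd n⟩ with hone
  have h1 : one ⋖ M one := by
    rcases hcov one with h | h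
    · exfalso
      have := dp_lt.mp h.lt
      have h2 : (M one).1 ∣ 1 := this.1
      exact this.2 (Nat.dvd_one.mp h2)
    · exact h
  obtain ⟨p, hp, hpone⟩ := (dp_covby hn0).mp h1
  have hpone' : (M one).1 = p := by rw [hpone, one_mul]
  have hpn : p ∣ n := hpone' ▸ (M one).2
  have claim : ∀ N, ∀ z : DivisorPoset n, z.1 < N →
      (Even (z.1.factorization p) → (M z).1 = z.1 * p) ∧
      (Odd (z.1.factorization p) → (M z).1 = z.1 / p) := by
    intro N
    induction N using Nat.strong_induction_on with
    | _ N ih =>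
    intro z hzN
    have IH : ∀ w : DivisorPoset n, w.1 < z.1 →
        (Even (w.1.factorization p) → (M w).1 = w.1 * p) ∧
        (Odd (w.1.factorization p) → (M w).1 = w.1 / p) :=
      fun w hw => ih z.1 hzN w hw
    by_cases hz1 : z.1 = 1
    · have hzo : z = one := Subtype.ext hz1
      constructor
      · intro _
        rw [hzo, hpone']
        show p = (1:ℕ) * p
        rw [one_mul]
      · intro hodd
        exfalso
        rw [hz1] at hodd
        simp [Nat.factorization_one] at hodd
    · have hz2 : 1 < z.1 := by have := dp_pos hn0 z; omega
      rcases Nat.even_or_odd (z.1.factorization p) with hev | hod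
      · -- even case : show (M z).1 = z.1 * p
        have hMzval : (M z).1 = z.1 * p := by
          rcases hcov z with hdown | hup
          · exfalso
            obtain ⟨q, hq, hzw⟩ := (dp_covby hn0).mp hdown
            set w := M z with hw
            have hw_pos : 0 < w.1 := dp_pos hn0 w
            have hw_lt : w.1 < z.1 := by nlinarith [hq.two_le]
            have hMw : M w = z := hinv z
            by_cases hqp : q = p
            · rw [hqp] at hzw hq
              have hvw : w.1.factorization p + 1 = z.1.factorization p := by
                rw [hzw]
                exact (fact_mul_p hp hw_pos.ne').symm
              have hodw : Odd (w.1.factorization p) := by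
                rw [Nat.even_iff] at hev; rw [Nat.odd_iff]; omega
              have h2 := (IH w hw_lt).2 hodw
              rw [hMw] at h2
              have h3 : w.1 / p ≤ w.1 := Nat.div_le_self _ _
              have h4 : w.1 < w.1 * p := by nlinarith [hp.two_le]
              omega
            · have hvw : w.1.factorization p = z.1.factorization p := by
                rw [hzw]; exact (fact_mul_ne hq hqp hw_pos.ne').symm
              have hevw : Even (w.1.factorization p) := by rw [hvw]; exact hev
              have h2 := (IH w hw_lt).1 hevw
              rw [hMw] at h2
              rw [hzw] at h2
              exact hqp (Nat.eq_of_mul_eq_mul_left hw_pos h2.symm).symm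
          · obtain ⟨q, hq, hMzv⟩ := (dp_covby hn0).mp hup
            have hqp : q = p := by
              by_contra hqp
              by_cases hex2 : ∃ r, r.Prime ∧ r ∣ z.1 ∧ r ≠ p
              · obtain ⟨r, hr, hrz, hrp⟩ := hex2
                have hxd : z.1 / r ∣ n := dvd_trans (Nat.div_dvd_of_dvd hrz) z.2
                set x : DivisorPoset n := ⟨z.1 / r, hxd⟩ with hxdef
                have hzx : z.1 = x.1 * r := (Nat.div_mul_cancel hrz).symm
                have hx_lt : x.1 < z.1 := Nat.div_lt_self (by omega) hr.one_lt
                have hxcov : x ⋖ z := (dp_covby hn0).mpr ⟨r, hr, hzx⟩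
                have hzMz : z.1 < (M z).1 := by
                  rw [hMzv]; nlinarith [hq.two_le, dp_pos hn0 z]
                have hxne : x ≠ M z := by
                  intro h
                  have := congrArg Subtype.val h
                  omega
                have hle : M x ≤ M z := hax x z hxcov hxne
                have hvx : x.1.factorization p = z.1.factorization p := by
                  rw [hzx]; exact (fact_mul_ne hr hrp (hz0 x)).symm
                have h1' : (M x).1 = x.1 * p := (IH x hx_lt).1 (by rw [hvx]; exact hev)
                have hdvd : x.1 * p ∣ z.1 * q := by
                  rw [← h1', ← hMzv]; exact dp_le.mp hle
                have hle2 := (Nat.factorization_le_iff_dvd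
                  (mul_ne_zero (hz0 x) hp.pos.ne') (mul_ne_zero (hz0 z) hq.pos.ne')).mpr hdvd
                rw [Finsupp.le_def] at hle2
                have hle3 := hle2 p
                rw [fact_mul_p hp (hz0 x), fact_mul_ne hq hqp (hz0 z), hvx] at hle3
                omega
              · push_neg at hex2
                have hpz : p ∣ z.1 := by
                  obtain ⟨r, hr, hrz⟩ := Nat.exists_prime_and_dvd hz1
                  rw [← hex2 r hr hrz]; exact hrz
                have hqz : ¬ q ∣ z.1 := fun h => hqp (hex2 q hq h)
                have hv1 : 1 ≤ z.1.factorization p :=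
                  (hp.dvd_iff_one_le_factorization (hz0 z)).mp hpz
                have hud : z.1 / p ∣ n := dvd_trans (Nat.div_dvd_of_dvd hpz) z.2
                set u : DivisorPoset n := ⟨z.1 / p, hud⟩ with hudef
                have hu_pos : 0 < u.1 := dp_pos hn0 u
                have hu_lt : u.1 < z.1 := Nat.div_lt_self (by omega) hp.one_lt
                have hup2 : u.1 * p = z.1 := Nat.div_mul_cancel hpz
                have hxdvd : u.1 * q ∣ (M z).1 := by
                  rw [hMzv]; exact mul_dvd_mul_right (Nat.div_dvd_of_dvd hpz) q
                set x : DivisorPoset n := ⟨u.1 * q, dvd_trans hxdvd (M z).2⟩ with hxdef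
                have hxcovMz : x ⋖ M z := by
                  refine (dp_covby hn0).mpr ⟨p, hp, ?_⟩
                  rw [hMzv]
                  show z.1 * q = u.1 * q * p
                  rw [mul_right_comm, hup2]
                have hMMz : M (M z) = z := hinv z
                have hqx : q ∣ x.1 := Dvd.intro_left u.1 rfl
                have hxnez : x ≠ M (M z) := by
                  rw [hMMz]
                  intro h
                  exact hqz (congrArg Subtype.val h ▸ hqx)
                have hle : M x ≤ M (M z) := hax x (M z) hxcovMz hxnez
                rw [hMMz] at hle
                have hMxdvd : (M x).1 ∣ z.1 := dp_le.mp hle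
                have hqMx : ¬ q ∣ (M x).1 := fun h => hqz (h.trans hMxdvd)
                rcases hcov x with hxd2 | hxu2
                · obtain ⟨s, hs, hxs⟩ := (dp_covby hn0).mp hxd2
                  have hsq : s = q := by
                    rcases (Nat.Prime.dvd_mul hq).mp (hxs ▸ hqx) with h | h
                    · exact absurd h hqMx
                    · exact ((Nat.prime_dvd_prime_iff_eq hq hs).mp h).symm
                  rw [hsq] at hxs
                  have hx_eq : x.1 = u.1 * q := rfl
                  have hMxval : (M x).1 = u.1 :=
                    Nat.eq_of_mul_eq_mul_right hq.pos (by rw [← hxs, hx_eq])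
                  have hMxu : M x = u := Subtype.ext hMxval
                  have hMu : M u = x := by rw [← hMxu, hinv]
                  have hvu : u.1.factorization p + 1 = z.1.factorization p :=
                    fact_div_p hp (hz0 z) hpz
                  have hodu : Odd (u.1.factorization p) := by
                    rw [Nat.even_iff] at hev; rw [Nat.odd_iff]; omega
                  have h2 := (IH u hu_lt).2 hodu
                  rw [hMu] at h2
                  have h3 : u.1 / p ≤ u.1 := Nat.div_le_self _ _
                  have h4 : u.1 < u.1 * q := by nlinarith [hq.two_le]
                  have hx_eq2 : x.1 = u.1 * q := rfl
                  omega
                · obtain ⟨s, hs, hxs⟩ := (dp_covby hn0).mp hxu2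
                  exact hqMx (hxs ▸ hqx.mul_right s)
            rw [hMzv, hqp]
        constructor
        · intro _; exact hMzval
        · intro hodd
          exfalso
          rw [Nat.even_iff] at hev; rw [Nat.odd_iff] at hodd; omega
      · -- odd case
        have hpz : p ∣ z.1 := p_dvd_of_odd hp (hz0 z) hod
        have hxd : z.1 / p ∣ n := dvd_trans (Nat.div_dvd_of_dvd hpz) z.2
        set x : DivisorPoset n := ⟨z.1 / p, hxd⟩ with hxdef
        have hx_lt : x.1 < z.1 := Nat.div_lt_self (by omega) hp.one_lt
        have hvx : x.1.factorization p + 1 = z.1.factorization p :=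
          fact_div_p hp (hz0 z) hpz
        have hex : Even (x.1.factorization p) := by
          rw [Nat.odd_iff] at hod; rw [Nat.even_iff]; omega
        have h1' : (M x).1 = x.1 * p := (IH x hx_lt).1 hex
        have hMx : M x = z := Subtype.ext (by rw [h1']; exact Nat.div_mul_cancel hpz)
        have hMz : M z = x := by rw [← hMx, hinv]
        constructor
        · intro he
          exfalso
          rw [Nat.even_iff] at he; rw [Nat.odd_iff] at hod; omega
        · intro _
          rw [hMz]
  have claim' : ∀ z : DivisorPoset n,
      (Even (z.1.factorization p) → (M z).1 = z.1 * p) ∧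
      (Odd (z.1.factorization p) → (M z).1 = z.1 / p) :=
    fun z => claim (z.1 + 1) z (Nat.lt_succ_self _)
  have hoddn : Odd (n.factorization p) := by
    by_contra hev
    rw [Nat.not_odd_iff_even] at hev
    set z0 : DivisorPoset n := ⟨p ^ n.factorization p, Nat.ordProj_dvd n p⟩ with hz0def
    have hvz0 : z0.1.factorization p = n.factorization p := by
      show (p ^ n.factorization p).factorization p = n.factorization p
      rw [hp.factorization_pow]
      simp
    have h := (claim' z0).1 (by rw [hvz0]; exact hev)
    have hdvd : p ^ (n.factorization p + 1) ∣ n := by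
      have := (M z0).2
      rw [h] at this
      show p ^ (n.factorization p) * p ∣ n
      exact this
    have := (hp.pow_dvd_iff_le_factorization hn0.ne').mp hdvd
    omega
  exact ⟨p, hp, hpn, hoddn, claim'⟩

end Aux

/-- For `n > 1`, a map `M` on the divisor poset `P_n` is a special
matching iff there is a prime `p ∣ n` with odd multiplicity in `n` such that `M`
multiplies by `p` divisors with even `p`-adic valuation, and divides by `p` divisors
with odd `p`-adic valuation. -/
theorem stmt_12 (n : ℕ) (hn : 1 < n) (M : DivisorPoset n → DivisorPoset n) :
    IsSpecialMatching M ↔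
      ∃ p : ℕ, p.Prime ∧ p ∣ n ∧ Odd (n.factorization p) ∧
        ∀ z : DivisorPoset n,
          (Even (z.1.factorization p) → (M z).1 = z.1 * p) ∧
          (Odd (z.1.factorization p) → (M z).1 = z.1 / p) := by
  constructor
  · exact fun h => Aux.forward hn M h
  · rintro ⟨p, hp, hpn, hodd, hMp⟩
    exact Aux.backward hn M hp hpn hodd hMp
end

section
/- Let K be a finite graded poset and P a special idempotent, i.e. an idempotent element of the submonoid of Or(K) generated by the maps P^M for special matchings M. Then for every v ∈ im(P), the fiber P^{-1}(v) is an interval of K (with minimum v). -/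
open scoped Classical in
/-- The idempotent `P^M` associated with a special matching `M`. -/
noncomputable def PMmap {K : Type*} [PartialOrder K] (M : K → K) : K → K :=
  fun x => if M x ⋖ x then M x else x

/-- The monoid `M^K ⊆ Or(K)` generated (inside `Function.End K`, whose identity is
`id`) by the idempotents `P^M` for special matchings `M`. -/
def specialMonoid (K : Type*) [PartialOrder K] : Submonoid (Function.End K) :=
  Submonoid.closure {f : Function.End K | ∃ M : K → K, IsSpecialMatching M ∧ f = PMmap M}

section Aux

variable {K : Type*} [PartialOrder K] [Fintype K]

/-- In a finite poset, below any strict inequality there is a covering step at the top. -/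
lemma aux_le_covBy {x y : K} (h : x < y) : ∃ z : K, x ≤ z ∧ z ⋖ y := by
  obtain ⟨z, ⟨hxz, hzy⟩, hmax⟩ := Set.Finite.exists_maximalFor id {z : K | x ≤ z ∧ z < y}
    (Set.toFinite _) ⟨x, le_refl x, h⟩
  refine ⟨z, hxz, hzy, fun c hzc hcy => ?_⟩
  have := hmax (j := c) ⟨hxz.trans hzc.le, hcy⟩ hzc.le
  simp only [id] at this
  exact absurd this (not_le_of_gt hzc)

lemma aux_covBy_le {x y : K} (h : x < y) : ∃ z : K, x ⋖ z ∧ z ≤ y := by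
  obtain ⟨z, ⟨hxz, hzy⟩, hmin⟩ := Set.Finite.exists_minimalFor id {z : K | x < z ∧ z ≤ y}
    (Set.toFinite _) ⟨y, h, le_refl y⟩
  refine ⟨z, ⟨hxz, fun c hxc hcz => ?_⟩, hzy⟩
  have := hmin (j := c) ⟨hxc, hcz.le.trans hzy⟩ hcz.le
  simp only [id] at this
  exact absurd this (not_le_of_gt hcz)

variable (ρ : K → ℕ) (hρ : ∀ x y : K, x ⋖ y → ρ y = ρ x + 1)

include hρ

lemma rho_lt : ∀ y x : K, x < y → ρ x < ρ y := by
  intro y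
  induction y using WellFoundedLT.induction with
  | _ y ih =>
    intro x hxy
    obtain ⟨z, hxz, hzy⟩ := aux_le_covBy hxy
    have hz : ρ y = ρ z + 1 := hρ _ _ hzy
    rcases eq_or_lt_of_le hxz with rfl | hlt
    · omega
    · have := ih z hzy.lt x hlt
      omega

lemma rho_le {x y : K} (h : x ≤ y) : ρ x ≤ ρ y := by
  rcases eq_or_lt_of_le h with rfl | h
  · exact le_refl _
  · exact (rho_lt ρ hρ y x h).le

lemma covBy_of_rank {x y : K} (h : x < y) (hr : ρ y = ρ x + 1) : x ⋖ y := by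
  refine ⟨h, fun c hxc hcy => ?_⟩
  have h1 := rho_lt ρ hρ c x hxc
  have h2 := rho_lt ρ hρ y c hcy
  omega

end Aux

section Mono

variable {K : Type*} [PartialOrder K] [Fintype K]

lemma monotone_of_cov {f : K → K} (h : ∀ a b : K, a ⋖ b → f a ≤ f b) : Monotone f := by
  intro x y
  induction y using WellFoundedLT.induction generalizing x with
  | _ y ih =>
    intro hxy
    rcases eq_or_lt_of_le hxy with rfl | hlt
    · exact le_refl _
    · obtain ⟨z, hxz, hzy⟩ := aux_le_covBy hlt
      exact (ih z hzy.lt hxz).trans (h z y hzy)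

end Mono

section SM

variable {K : Type*} [PartialOrder K] [Fintype K]
variable {M : K → K} (hM : IsSpecialMatching M)
variable (ρ : K → ℕ) (hρ : ∀ x y : K, x ⋖ y → ρ y = ρ x + 1)

include hM hρ

/-- Lifting property, part (a): if `u ≤ w` and `M w ⋖ w` then `M u ≤ w`. -/
lemma sm_A : ∀ u w : K, u ≤ w → M w ⋖ w → M u ≤ w := by
  obtain ⟨hinv, hmatch, haxiom⟩ := hM
  suffices H : ∀ n : ℕ, ∀ u w : K, ρ w - ρ u = n → u ≤ w → M w ⋖ w → M u ≤ w by
    intro u w h1 h2; exact H _ u w rfl h1 h2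
  intro n
  induction n using Nat.strong_induction_on with
  | _ n ih =>
    intro u w hn huw hw
    rcases hmatch u with hu | hu
    · exact hu.le.trans huw
    · -- u ⋖ M u
      have hne : u ≠ w := by
        rintro rfl; exact absurd hu.lt (asymm hw.lt)
      have hlt : u < w := lt_of_le_of_ne huw hne
      obtain ⟨z, huz, hzw⟩ := aux_covBy_le hlt
      by_cases hzMu : z = M u
      · exact hzMu ▸ hzw
      · have huMz : u ≠ M z := by
          intro h; apply hzMu; rw [h, hinv]
        have hMuMz : M u ≤ M z := haxiom u z huz huMz
        rcases hmatch z with hz | hz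
        · exact hMuMz.trans (hz.le.trans hzw)
        · -- z ⋖ M z
          have hzne : z ≠ w := by
            rintro rfl; exact absurd hz.lt (asymm hw.lt)
          have hzlt : z < w := lt_of_le_of_ne hzw hzne
          have hru : ρ u < ρ w := rho_lt ρ hρ w u hlt
          have hrz : ρ z = ρ u + 1 := hρ _ _ huz
          have hrzw : ρ z ≤ ρ w := rho_le ρ hρ hzw
          have : M z ≤ w := ih (ρ w - ρ z) (by omega) z w rfl hzw hw
          exact hMuMz.trans this

/-- Lifting property, part (c): if `u ≤ w`, `M w ⋖ w`, `u ⋖ M u`, then `u ≤ M w`. -/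
lemma sm_C : ∀ u w : K, u ≤ w → M w ⋖ w → u ⋖ M u → u ≤ M w := by
  obtain ⟨hinv, hmatch, haxiom⟩ := hM
  suffices H : ∀ n : ℕ, ∀ u w : K, ρ w - ρ u = n → u ≤ w → M w ⋖ w → u ⋖ M u → u ≤ M w by
    intro u w h1 h2 h3; exact H _ u w rfl h1 h2 h3
  intro n
  induction n using Nat.strong_induction_on with
  | _ n ih =>
    intro u w hn huw hw hu
    have hne : u ≠ w := by
      rintro rfl; exact absurd hu.lt (asymm hw.lt)
    have hlt : u < w := lt_of_le_of_ne huw hne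
    obtain ⟨y, huy, hyw⟩ := aux_le_covBy hlt
    by_cases hyMw : y = M w
    · exact hyMw ▸ huy
    · have hMyMw : M y ≤ M w := haxiom y w hyw hyMw
      rcases hmatch y with hy | hy
      · -- M y ⋖ y : apply IH to (u, y)
        have hry : ρ w = ρ y + 1 := hρ _ _ hyw
        have hruy : ρ u ≤ ρ y := rho_le ρ hρ huy
        have hruw : ρ u < ρ w := rho_lt ρ hρ w u hlt
        have : u ≤ M y := ih (ρ y - ρ u) (by omega) u y rfl huy hy hu
        exact this.trans hMyMw
      · -- y ⋖ M y : impossible by rank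
        exfalso
        have h1 : ρ (M y) = ρ y + 1 := hρ _ _ hy
        have h2 : ρ w = ρ (M w) + 1 := hρ _ _ hw
        have h3 : ρ w = ρ y + 1 := hρ _ _ hyw
        have h4 : ρ (M y) ≤ ρ (M w) := rho_le ρ hρ hMyMw
        omega

end SM

section PM

variable {K : Type*} [PartialOrder K] [Fintype K]

lemma PM_le {M : K → K} (x : K) : PMmap M x ≤ x := by
  unfold PMmap
  split
  · exact (by assumption : M x ⋖ x).le
  · exact le_refl x

lemma PM_eq_of_cov {M : K → K} {x : K} (h : M x ⋖ x) : PMmap M x = M x := by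
  unfold PMmap; rw [if_pos h]

lemma PM_eq_of_not_cov {M : K → K} {x : K} (h : ¬ M x ⋖ x) : PMmap M x = x := by
  unfold PMmap; rw [if_neg h]

variable {M : K → K} (hM : IsSpecialMatching M)

include hM

lemma PM_mono : Monotone (PMmap M) := by
  apply monotone_of_cov
  intro x y hxy
  obtain ⟨hinv, hmatch, haxiom⟩ := hM
  by_cases hy : M y ⋖ y
  · rw [PM_eq_of_cov hy]
    by_cases hxMy : x = M y
    · exact (PM_le x).trans hxMy.le
    · have hMxMy : M x ≤ M y := haxiom x y hxy hxMy
      by_cases hx : M x ⋖ x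
      · rw [PM_eq_of_cov hx]; exact hMxMy
      · rw [PM_eq_of_not_cov hx]
        rcases hmatch x with h | h
        · exact absurd h hx
        · exact h.le.trans hMxMy
  · rw [PM_eq_of_not_cov hy]
    exact (PM_le x).trans hxy.le

variable (ρ : K → ℕ) (hρ : ∀ x y : K, x ⋖ y → ρ y = ρ x + 1)
include hρ

open scoped Classical in
/-- Upper description: `PMmap M x ≤ b` iff `x ≤ T b` where `T b` is the up-projection. -/
lemma PM_le_iff (b : K) (x : K) :
    PMmap M x ≤ b ↔ x ≤ (if b ⋖ M b then M b else b) := by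
  have hinv := hM.1
  have hmatch := hM.2.1
  by_cases hb : b ⋖ M b
  case pos =>
    rw [if_pos hb]
    constructor
    · intro h
      by_cases hx : M x ⋖ x
      · rw [PM_eq_of_cov hx] at h
        -- M x ≤ b, b ⋖ M b ⊢ x ≤ M b ; apply sm_A with u := M x, w := M b
        have hw : M (M b) ⋖ M b := by rw [hinv]; exact hb
        have := sm_A hM ρ hρ (M x) (M b) (h.trans hb.le) hw
        rwa [hinv] at this
      · rw [PM_eq_of_not_cov hx] at h
        exact h.trans hb.le
    · intro h
      have : PMmap M x ≤ PMmap M (M b) := PM_mono hM h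
      have hMb : PMmap M (M b) = b := by
        have : M (M b) ⋖ M b := by rw [hinv]; exact hb
        rw [PM_eq_of_cov this, hinv]
      rwa [hMb] at this
  case neg =>
    rw [if_neg hb]
    have hb' : M b ⋖ b := (hmatch b).resolve_right hb
    constructor
    · intro h
      by_cases hx : M x ⋖ x
      · rw [PM_eq_of_cov hx] at h
        have := sm_A hM ρ hρ (M x) b h hb'
        rwa [hinv] at this
      · rwa [PM_eq_of_not_cov hx] at h
    · intro h
      exact (PM_le x).trans h

/-- Lower description: if `v ⋖ M v` then `v ≤ PMmap M x ↔ v ≤ x`. -/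
lemma PM_ge_iff {v : K} (hv : v ⋖ M v) (x : K) :
    v ≤ PMmap M x ↔ v ≤ x := by
  constructor
  · intro h; exact h.trans (PM_le x)
  · intro h
    by_cases hx : M x ⋖ x
    · rw [PM_eq_of_cov hx]
      exact sm_C hM ρ hρ v x h hx hv
    · rwa [PM_eq_of_not_cov hx]

end PM

section Main

variable {K : Type*} [PartialOrder K] [Fintype K]

/-- The invariant preserved by the monoid generated by the projections. -/
def SpecialInv (ρ : K → ℕ) (f : K → K) : Prop :=
  Monotone f ∧ (∀ x, f x ≤ x) ∧
    ∀ v b : K, f v = v → v ≤ b → ∃ w : K, {x : K | v ≤ f x ∧ f x ≤ b} = Set.Icc v w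

variable (ρ : K → ℕ) (hρ : ∀ x y : K, x ⋖ y → ρ y = ρ x + 1)

include hρ in
lemma specialInv_of_mem {P : Function.End K} (hP : P ∈ specialMonoid K) :
    SpecialInv ρ P := by
  induction hP using Submonoid.closure_induction with
  | mem f hf =>
    obtain ⟨M, hM, rfl⟩ := hf
    refine ⟨PM_mono hM, PM_le, fun v b hv hvb => ?_⟩
    classical
    have hvM : v ⋖ M v := by
      rcases hM.2.1 v with h | h
      · exfalso
        rw [PM_eq_of_cov h] at hv
        exact absurd hv h.lt.ne
      · exact h
    refine ⟨if b ⋖ M b then M b else b, ?_⟩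
    ext x
    simp only [Set.mem_setOf_eq, Set.mem_Icc]
    rw [PM_ge_iff hM ρ hρ hvM, PM_le_iff hM ρ hρ]
  | one =>
    refine ⟨monotone_id, fun x => le_refl x, fun v b _ hvb => ⟨b, ?_⟩⟩
    ext x
    exact Iff.rfl
  | mul f g hfm hgm hf hg =>
    obtain ⟨hfmono, hfle, hffib⟩ := hf
    obtain ⟨hgmono, hgle, hgfib⟩ := hg
    have hfg : ∀ x, (f * g) x = f (g x) := fun x => rfl
    refine ⟨?_, ?_, ?_⟩
    · intro x y hxy
      exact hfmono (hgmono hxy)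
    · intro x
      exact (hfle (g x)).trans (hgle x)
    · intro v b hv hvb
      rw [hfg] at hv
      have hgv : g v = v := le_antisymm (hgle v) (by
        calc v = f (g v) := hv.symm
        _ ≤ g v := hfle _)
      have hfv : f v = v := by rw [hgv] at hv; exact hv
      obtain ⟨w, hw⟩ := hffib v b hfv hvb
      have hvw : v ≤ w := by
        have : v ∈ {x : K | v ≤ f x ∧ f x ≤ b} := ⟨le_of_eq hfv.symm, hfv.le.trans hvb⟩
        rw [hw] at this
        exact this.2
      obtain ⟨w', hw'⟩ := hgfib v w hgv hvw
      refine ⟨w', ?_⟩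
      ext x
      have h1 := Set.ext_iff.mp hw (g x)
      have h2 := Set.ext_iff.mp hw' x
      simp only [Set.mem_setOf_eq, Set.mem_Icc] at h1 h2 ⊢
      simp only [hfg]
      rw [h1, h2]

end Main

/-- For a special idempotent `P` of a finite graded poset `K`, every
fiber `P⁻¹(v)` with `v ∈ im(P)` is an interval of `K` (with minimum `v`). -/
theorem stmt_13 {K : Type*} [PartialOrder K] [Fintype K] [OrderBot K] [OrderTop K]
    (ρ : K → ℕ) (hρbot : ρ ⊥ = 0) (hρ : ∀ x y : K, x ⋖ y → ρ y = ρ x + 1)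
    (P : Function.End K) (hP : P ∈ specialMonoid K) (hidem : P * P = P) :
    ∀ v ∈ Set.range (P : K → K), ∃ w : K, {x : K | P x = v} = Set.Icc v w := by
  intro v hv
  obtain ⟨u, rfl⟩ := hv
  have hfix : P (P u) = P u := by
    have := congrFun hidem u
    exact this
  obtain ⟨_, _, hfib⟩ := specialInv_of_mem ρ hρ hP
  obtain ⟨w, hw⟩ := hfib (P u) (P u) hfix (le_refl _)
  refine ⟨w, ?_⟩
  rw [← hw]
  ext x
  simp only [Set.mem_setOf_eq]
  constructor
  · intro h; exact ⟨h.ge, h.le⟩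
  · intro ⟨h1, h2⟩; exact le_antisymm h2 h1
end

section
/- Let n ≥ 2 and c_n the n-element chain. The number of special partial matchings of c_n equals the Fibonacci number F_{n-1}. -/
/-- A special partial matching of a finite graded poset with maximum `⊤`: an
involution `M` with `M ⊤ ⋖ ⊤`, such that each `x` satisfies `M x ⋖ x`, `x ⋖ M x` or
`M x = x`, and such that `x ⋖ y` with `x ≠ M y` implies `M x ≤ M y`. -/
def IsSpecialPartialMatching {K : Type*} [PartialOrder K] [OrderTop K]
    (M : K → K) : Prop :=
  (∀ x, M (M x) = x) ∧ (M ⊤ ⋖ ⊤) ∧ (∀ x, M x ⋖ x ∨ x ⋖ M x ∨ M x = x) ∧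
    (∀ x y : K, x ⋖ y → x ≠ M y → M x ≤ M y)

namespace Stmt18Aux

/-- An "adjacent matching" of the chain `Fin k`. -/
def Adj {k : ℕ} (M : Fin k → Fin k) : Prop :=
  (∀ x, M (M x) = x) ∧ ∀ x, ((M x : ℕ) = (x : ℕ) + 1 ∨ (x : ℕ) = (M x : ℕ) + 1 ∨ M x = x)

lemma fin_covBy_iff {k : ℕ} {a b : Fin k} : a ⋖ b ↔ (a : ℕ) + 1 = (b : ℕ) := by
  rw [← Fin.coe_covBy_iff, Order.covBy_iff_add_one_eq]

/-- Extend a matching of `Fin k` by one extra fixed point on top. -/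
def ext1 {k : ℕ} (M : Fin k → Fin k) : Fin (k + 1) → Fin (k + 1) := fun x =>
  if h : (x : ℕ) < k then Fin.castLE (by omega) (M ⟨(x : ℕ), h⟩) else ⟨k, by omega⟩

/-- Extend a matching of `Fin k` by one matched pair on top. -/
def ext2 {k : ℕ} (M : Fin k → Fin k) : Fin (k + 2) → Fin (k + 2) := fun x =>
  if h : (x : ℕ) < k then Fin.castLE (by omega) (M ⟨(x : ℕ), h⟩)
  else if (x : ℕ) = k then ⟨k + 1, by omega⟩ else ⟨k, by omega⟩

lemma ext1_lt {k : ℕ} (M : Fin k → Fin k) (x : Fin (k + 1)) (h : (x : ℕ) < k) :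
    ext1 M x = Fin.castLE (by omega) (M ⟨(x : ℕ), h⟩) := by
  simp only [ext1, dif_pos h]

lemma ext1_last {k : ℕ} (M : Fin k → Fin k) (x : Fin (k + 1)) (h : (x : ℕ) = k) :
    ext1 M x = ⟨k, by omega⟩ := by
  have h' : ¬ (x : ℕ) < k := by omega
  simp only [ext1, dif_neg h']

lemma ext2_lt {k : ℕ} (M : Fin k → Fin k) (x : Fin (k + 2)) (h : (x : ℕ) < k) :
    ext2 M x = Fin.castLE (by omega) (M ⟨(x : ℕ), h⟩) := by
  simp only [ext2, dif_pos h]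

lemma ext2_k {k : ℕ} (M : Fin k → Fin k) (x : Fin (k + 2)) (h : (x : ℕ) = k) :
    ext2 M x = ⟨k + 1, by omega⟩ := by
  have h' : ¬ (x : ℕ) < k := by omega
  simp only [ext2, dif_neg h', if_pos h]

lemma ext2_top {k : ℕ} (M : Fin k → Fin k) (x : Fin (k + 2)) (h : (x : ℕ) = k + 1) :
    ext2 M x = ⟨k, by omega⟩ := by
  have h' : ¬ (x : ℕ) < k := by omega
  have h'' : ¬ (x : ℕ) = k := by omega
  simp only [ext2, dif_neg h', if_neg h'']

lemma adj_ext1 {k : ℕ} {M : Fin k → Fin k} (hM : Adj M) :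
    Adj (ext1 M) ∧ ext1 M (Fin.last k) = Fin.last k := by
  refine ⟨⟨?_, ?_⟩, ?_⟩
  · intro x
    rcases lt_or_ge (x : ℕ) k with h | h
    · rw [ext1_lt M x h]
      have h2 : ((Fin.castLE (by omega) (M ⟨(x : ℕ), h⟩) : Fin (k + 1)) : ℕ) < k :=
        (M ⟨(x : ℕ), h⟩).isLt
      rw [ext1_lt M _ h2]
      apply Fin.ext
      simp only [Fin.coe_castLE]
      have : (⟨((M ⟨(x : ℕ), h⟩ : Fin k) : ℕ), (M ⟨(x : ℕ), h⟩).isLt⟩ : Fin k) = M ⟨(x : ℕ), h⟩ := rfl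
      rw [this, hM.1]
    · have hx : (x : ℕ) = k := by omega
      rw [ext1_last M x hx, ext1_last M _ rfl]
      exact Fin.ext hx.symm
  · intro x
    rcases lt_or_ge (x : ℕ) k with h | h
    · rw [ext1_lt M x h]
      rcases hM.2 ⟨(x : ℕ), h⟩ with h1 | h1 | h1
      · exact Or.inl (by simpa using h1)
      · exact Or.inr (Or.inl (by simpa using h1))
      · refine Or.inr (Or.inr ?_)
        apply Fin.ext
        simp [h1]
    · have hx : (x : ℕ) = k := by omega
      rw [ext1_last M x hx]
      exact Or.inr (Or.inr (Fin.ext hx.symm))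
  · rw [ext1_last M _ (by simp [Fin.last])]
    exact Fin.ext rfl

lemma adj_ext2 {k : ℕ} {M : Fin k → Fin k} (hM : Adj M) :
    Adj (ext2 M) ∧ ((ext2 M (Fin.last (k + 1)) : ℕ) = k) := by
  have hlast : ((Fin.last (k + 1) : Fin (k + 2)) : ℕ) = k + 1 := rfl
  refine ⟨⟨?_, ?_⟩, ?_⟩
  · intro x
    rcases lt_or_ge (x : ℕ) k with h | h
    · rw [ext2_lt M x h]
      have h2 : ((Fin.castLE (by omega) (M ⟨(x : ℕ), h⟩) : Fin (k + 2)) : ℕ) < k :=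
        (M ⟨(x : ℕ), h⟩).isLt
      rw [ext2_lt M _ h2]
      apply Fin.ext
      simp only [Fin.coe_castLE]
      have : (⟨((M ⟨(x : ℕ), h⟩ : Fin k) : ℕ), (M ⟨(x : ℕ), h⟩).isLt⟩ : Fin k) = M ⟨(x : ℕ), h⟩ := rfl
      rw [this, hM.1]
    · rcases eq_or_lt_of_le h with hx | hx
      · rw [ext2_k M x hx.symm, ext2_top M _ rfl]
        exact Fin.ext hx
      · have hx' : (x : ℕ) = k + 1 := by omega
        rw [ext2_top M x hx', ext2_k M _ rfl]
        exact Fin.ext hx'.symm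
  · intro x
    rcases lt_or_ge (x : ℕ) k with h | h
    · rw [ext2_lt M x h]
      rcases hM.2 ⟨(x : ℕ), h⟩ with h1 | h1 | h1
      · exact Or.inl (by simpa using h1)
      · exact Or.inr (Or.inl (by simpa using h1))
      · refine Or.inr (Or.inr ?_)
        apply Fin.ext
        simp [h1]
    · rcases eq_or_lt_of_le h with hx | hx
      · rw [ext2_k M x hx.symm]
        exact Or.inl (by simp [hx])
      · have hx' : (x : ℕ) = k + 1 := by omega
        rw [ext2_top M x hx']
        exact Or.inr (Or.inl (by simp [hx']))
  · rw [ext2_top M _ hlast]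

lemma card_fixed (k : ℕ) :
    Nat.card {M : Fin (k + 1) → Fin (k + 1) //
        Adj M ∧ M (Fin.last k) = Fin.last k} =
      Nat.card {M : Fin k → Fin k // Adj M} := by
  symm
  apply Nat.card_eq_of_bijective
    (f := fun N => ⟨ext1 N.1, (adj_ext1 N.2).1, (adj_ext1 N.2).2⟩)
  constructor
  · rintro ⟨M, hM⟩ ⟨N, hN⟩ h
    have h' : ext1 M = ext1 N := congrArg Subtype.val h
    refine Subtype.ext (funext fun y => ?_)
    have := congrFun h' ⟨(y : ℕ), by omega⟩
    rw [ext1_lt M _ (by exact y.isLt), ext1_lt N _ (by exact y.isLt)] at this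
    have hv := congrArg Fin.val this
    simp only [Fin.coe_castLE] at hv
    exact Fin.ext hv
  · rintro ⟨M, hAdj, hfix⟩
    have hlt : ∀ x : Fin (k + 1), (x : ℕ) < k → ((M x : ℕ) < k) := by
      intro x hx
      by_contra hc
      have hv : (M x : ℕ) = k := by omega
      have : M x = Fin.last k := Fin.ext hv
      have : x = Fin.last k := by
        have := congrArg M this
        rw [hfix] at this
        rw [← hAdj.1 x, this]
      rw [this] at hx
      simp [Fin.last] at hx
    refine ⟨⟨fun y => ⟨(M ⟨(y : ℕ), by omega⟩ : ℕ), hlt _ (by exact y.isLt)⟩, ?_, ?_⟩, ?_⟩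
    · intro y
      apply Fin.ext
      have hy : (⟨((M ⟨(y : ℕ), _⟩ : Fin (k + 1)) : ℕ), by omega⟩ : Fin (k + 1)) =
          M ⟨(y : ℕ), by omega⟩ := rfl
      simp only [hy, hAdj.1]
    · intro y
      have h1 := hAdj.2 (⟨(y : ℕ), by omega⟩ : Fin (k + 1))
      rcases h1 with h1 | h1 | h1
      · exact Or.inl (by simpa using h1)
      · exact Or.inr (Or.inl (by simpa using h1))
      · exact Or.inr (Or.inr (Fin.ext (by simpa using congrArg Fin.val h1)))
    · refine Subtype.ext (funext fun x => ?_)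
      show ext1 _ x = M x
      rcases lt_or_ge (x : ℕ) k with h | h
      · rw [ext1_lt _ x h]
        apply Fin.ext
        simp only [Fin.coe_castLE]
      · have hx : (x : ℕ) = k := by omega
        rw [ext1_last _ x hx]
        have : x = Fin.last k := Fin.ext hx
        rw [this, hfix]
        exact Fin.ext rfl

set_option maxHeartbeats 1000000 in
lemma card_pair (k : ℕ) :
    Nat.card {M : Fin (k + 2) → Fin (k + 2) //
        Adj M ∧ ((M (Fin.last (k + 1)) : ℕ) = k)} =
      Nat.card {M : Fin k → Fin k // Adj M} := by
  symm
  apply Nat.card_eq_of_bijective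
    (f := fun N => ⟨ext2 N.1, (adj_ext2 N.2).1, (adj_ext2 N.2).2⟩)
  constructor
  · rintro ⟨M, hM⟩ ⟨N, hN⟩ h
    have h' : ext2 M = ext2 N := congrArg Subtype.val h
    refine Subtype.ext (funext fun y => ?_)
    have := congrFun h' ⟨(y : ℕ), by omega⟩
    rw [ext2_lt M _ (by exact y.isLt), ext2_lt N _ (by exact y.isLt)] at this
    have hv := congrArg Fin.val this
    simp only [Fin.coe_castLE] at hv
    exact Fin.ext hv
  · rintro ⟨M, hAdj, htopv⟩
    have hlastval : ((Fin.last (k + 1) : Fin (k + 2)) : ℕ) = k + 1 := rfl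
    have htop : M (Fin.last (k + 1)) = ⟨k, by omega⟩ := Fin.ext htopv
    have hk : M ⟨k, by omega⟩ = Fin.last (k + 1) := by
      have := congrArg M htop
      rw [hAdj.1] at this
      exact this.symm
    have hlt : ∀ x : Fin (k + 2), (x : ℕ) < k → ((M x : ℕ) < k) := by
      intro x hx
      by_contra hc
      rcases eq_or_lt_of_le (not_lt.mp hc) with hv | hv
      · have : M x = ⟨k, by omega⟩ := Fin.ext hv.symm
        have hx2 : x = Fin.last (k + 1) := by
          have := congrArg M this
          rw [hAdj.1, hk] at this
          exact this
        rw [hx2, hlastval] at hx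
        omega
      · have hv' : (M x : ℕ) = k + 1 := by have := (M x).isLt; omega
        have : M x = Fin.last (k + 1) := Fin.ext hv'
        have hx2 : x = ⟨k, by omega⟩ := by
          have := congrArg M this
          rw [hAdj.1, htop] at this
          exact this
        rw [hx2] at hx
        simp at hx
    have hylt : ∀ y : Fin k, ((⟨(y : ℕ), by omega⟩ : Fin (k + 2)) : ℕ) < k :=
      fun y => y.isLt
    set N : Fin k → Fin k :=
      fun y => ⟨(M ⟨(y : ℕ), by omega⟩ : ℕ), hlt _ (hylt y)⟩ with hNdef
    have hadjN : Adj N := by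
      constructor
      · intro y
        apply Fin.ext
        have hy : (⟨((M ⟨(y : ℕ), by omega⟩ : Fin (k + 2)) : ℕ), by omega⟩ : Fin (k + 2)) =
            M ⟨(y : ℕ), by omega⟩ := rfl
        show ((M ⟨((M ⟨(y : ℕ), by omega⟩ : Fin (k + 2)) : ℕ), by omega⟩ : Fin (k + 2)) : ℕ)
          = (y : ℕ)
        rw [hy, hAdj.1]
      · intro y
        have h1 := hAdj.2 (⟨(y : ℕ), by omega⟩ : Fin (k + 2))
        rcases h1 with h1 | h1 | h1
        · exact Or.inl h1
        · exact Or.inr (Or.inl h1)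
        · have h2 := congrArg Fin.val h1
          exact Or.inr (Or.inr (Fin.ext h2))
    have hext : ext2 N = M := by
      funext x
      rcases lt_or_ge (x : ℕ) k with h | h
      · rw [ext2_lt _ x h]
        apply Fin.ext
        show ((M ⟨((⟨(x : ℕ), h⟩ : Fin k) : ℕ), by omega⟩ : Fin (k + 2)) : ℕ) = ((M x : Fin (k + 2)) : ℕ)
        congr 1
      · rcases eq_or_lt_of_le h with hx | hx
        · rw [ext2_k _ x hx.symm]
          have hxe : x = ⟨k, by omega⟩ := Fin.ext hx.symm
          rw [hxe, hk]
          exact Fin.ext rfl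
        · have hx' : (x : ℕ) = k + 1 := by have := x.isLt; omega
          rw [ext2_top _ x hx']
          have hxe : x = Fin.last (k + 1) := Fin.ext hx'
          rw [hxe, htop]
    exact ⟨⟨N, hadjN⟩, Subtype.ext hext⟩


lemma card_adj (k : ℕ) :
    Nat.card {M : Fin k → Fin k // Adj M} = Nat.fib (k + 1) := by
  induction k using Nat.strong_induction_on with
  | _ k ih =>
    match k with
    | 0 =>
      haveI : Unique {M : Fin 0 → Fin 0 // Adj M} :=
        ⟨⟨⟨id, fun x => rfl, fun x => Or.inr (Or.inr rfl)⟩⟩,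
          fun a => Subtype.ext (funext fun x => x.elim0)⟩
      simp [Nat.card_unique]
    | 1 =>
      haveI : Unique {M : Fin 1 → Fin 1 // Adj M} :=
        ⟨⟨⟨id, fun x => rfl, fun x => Or.inr (Or.inr rfl)⟩⟩,
          fun a => Subtype.ext (funext fun x => Subsingleton.elim _ _)⟩
      simp [Nat.card_unique]
    | (k + 2) =>
      classical
      set p : (Fin (k + 2) → Fin (k + 2)) → Prop :=
        fun M => Adj M ∧ M (Fin.last (k + 1)) = Fin.last (k + 1) with hp
      set q : (Fin (k + 2) → Fin (k + 2)) → Prop :=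
        fun M => Adj M ∧ ((M (Fin.last (k + 1)) : ℕ) = k) with hq
      have hiff : ∀ M : Fin (k + 2) → Fin (k + 2), Adj M ↔ p M ∨ q M := by
        intro M
        constructor
        · intro hM
          rcases hM.2 (Fin.last (k + 1)) with h1 | h1 | h1
          · exfalso
            have := (M (Fin.last (k + 1))).isLt
            rw [Fin.val_last] at h1
            omega
          · right
            refine ⟨hM, ?_⟩
            rw [Fin.val_last] at h1
            omega
          · exact Or.inl ⟨hM, h1⟩
        · rintro (⟨h, _⟩ | ⟨h, _⟩) <;> exact h
      have hdisj : Disjoint p q := by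
        rw [disjoint_iff_inf_le]
        intro M hM
        exfalso
        have h1 : p M ∧ q M := hM
        have h2 := h1.1.2
        have h3 := h1.2.2
        rw [h2, Fin.val_last] at h3
        omega
      calc Nat.card {M : Fin (k + 2) → Fin (k + 2) // Adj M}
          = Nat.card {M : Fin (k + 2) → Fin (k + 2) // p M ∨ q M} :=
            Nat.card_congr (Equiv.subtypeEquivRight hiff)
        _ = Nat.card ({M // p M} ⊕ {M // q M}) :=
            Nat.card_congr (subtypeOrEquiv p q hdisj)
        _ = Nat.card {M // p M} + Nat.card {M // q M} := Nat.card_sum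
        _ = Nat.fib (k + 2) + Nat.fib (k + 1) := by
            rw [hp, hq, card_fixed (k + 1), card_pair k,
              ih (k + 1) (by omega), ih k (by omega)]
        _ = Nat.fib (k + 3) := by rw [add_comm, ← Nat.fib_add_two]

lemma spm_iff (m : ℕ) (M : Fin (m + 2) → Fin (m + 2)) :
    IsSpecialPartialMatching M ↔ Adj M ∧ ((M (Fin.last (m + 1)) : ℕ) = m) := by
  have htop : (⊤ : Fin (m + 2)) = Fin.last (m + 1) := rfl
  have htopv : ((⊤ : Fin (m + 2)) : ℕ) = m + 1 := rfl
  constructor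
  · rintro ⟨hinv, hcov, hadj, _⟩
    refine ⟨⟨hinv, fun x => ?_⟩, ?_⟩
    · rcases hadj x with h | h | h
      · exact Or.inr (Or.inl (fin_covBy_iff.mp h).symm)
      · exact Or.inl (fin_covBy_iff.mp h).symm
      · exact Or.inr (Or.inr h)
    · have h2 := fin_covBy_iff.mp hcov
      rw [htop, Fin.val_last] at h2
      omega
  · rintro ⟨⟨hinv, hadj⟩, hm⟩
    refine ⟨hinv, ?_, ?_, ?_⟩
    · rw [fin_covBy_iff, htop, Fin.val_last]
      omega
    · intro x
      rcases hadj x with h | h | h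
      · exact Or.inr (Or.inl (fin_covBy_iff.mpr h.symm))
      · exact Or.inl (fin_covBy_iff.mpr h.symm)
      · exact Or.inr (Or.inr h)
    · intro x y hxy hne
      have hv : (x : ℕ) + 1 = (y : ℕ) := fin_covBy_iff.mp hxy
      have hMy : (x : ℕ) + 1 ≤ (M y : ℕ) := by
        rcases hadj y with h | h | h
        · omega
        · exfalso
          exact hne (Fin.ext (by omega)).symm
        · rw [h]; omega
      have hMx : (M x : ℕ) ≤ (x : ℕ) := by
        rcases hadj x with h | h | h
        · exfalso
          have hxy' : M x = y := Fin.ext (by omega)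
          have : M y = x := by rw [← hxy', hinv]
          exact hne this.symm
        · omega
        · rw [h]
      rw [Fin.le_def]
      omega

end Stmt18Aux

/-- For `n ≥ 1`, the number of special partial matchings of the chain
with `n + 1` elements equals the Fibonacci number `F_n` (so the chain `c_m` with
`m = n + 1 ≥ 2` elements has `F_{m-1}` special partial matchings). -/
theorem stmt_18 (n : ℕ) (hn : 1 ≤ n) :
    Nat.card {M : Fin (n + 1) → Fin (n + 1) // IsSpecialPartialMatching M} =
      Nat.fib n := by
  obtain ⟨m, rfl⟩ : ∃ m, n = m + 1 := ⟨n - 1, by omega⟩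
  calc Nat.card {M : Fin (m + 2) → Fin (m + 2) // IsSpecialPartialMatching M}
      = Nat.card {M : Fin (m + 2) → Fin (m + 2) //
          Stmt18Aux.Adj M ∧ ((M (Fin.last (m + 1)) : ℕ) = m)} :=
        Nat.card_congr (Equiv.subtypeEquivRight (Stmt18Aux.spm_iff m))
    _ = Nat.card {M : Fin m → Fin m // Stmt18Aux.Adj M} := Stmt18Aux.card_pair m
    _ = Nat.fib (m + 1) := Stmt18Aux.card_adj m
end

section
/- Let K₁ and K₂ be finite graded posets. Then M is a special partial matching of K₁ × K₂ if and only if M = N × id_{K₂} for some special partial matching N of K₁, or M = id_{K₁} × N for some special partial matching N of K₂. -/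
section Aux

variable {α : Type*} [PartialOrder α] [Fintype α]

private lemma spm_exists_covBy_le {u v : α} (h : u < v) : ∃ w, u ⋖ w ∧ w ≤ v := by
  obtain ⟨m, hm, hmin⟩ := (Finite.to_wellFoundedLT (α := α)).wf.has_min
    {z | u < z ∧ z ≤ v} ⟨v, h, le_rfl⟩
  exact ⟨m, ⟨hm.1, fun c hc hcm => hmin c ⟨hc, hcm.le.trans hm.2⟩ hcm⟩, hm.2⟩

private lemma spm_rank_strictMono (ρ : α → ℕ)
    (hρ : ∀ x y : α, x ⋖ y → ρ y = ρ x + 1) : StrictMono ρ := by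
  intro u v huv
  induction u using ((Finite.to_wellFoundedGT (α := α)).wf).induction generalizing v with
  | _ x IH =>
    obtain ⟨w, hw, hwv⟩ := spm_exists_covBy_le huv
    have h1 : ρ w = ρ x + 1 := hρ _ _ hw
    rcases eq_or_lt_of_le hwv with rfl | hlt
    · omega
    · have h2 : ρ w < ρ v := IH w hw.lt hlt
      omega

private lemma spm_eq_of_le_of_rank_le (ρ : α → ℕ)
    (hρ : ∀ x y : α, x ⋖ y → ρ y = ρ x + 1) {u v : α} (hle : u ≤ v)
    (hr : ρ v ≤ ρ u) : u = v := by
  rcases eq_or_lt_of_le hle with rfl | hlt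
  · rfl
  · exact absurd (spm_rank_strictMono ρ hρ hlt) (by omega)

end Aux

section Key

private lemma spm_key {K₁ K₂ : Type*} [PartialOrder K₁] [PartialOrder K₂]
    [Fintype K₁] [Fintype K₂] [OrderTop K₁] [OrderTop K₂]
    (ρ₁ : K₁ → ℕ) (hρ₁ : ∀ x y : K₁, x ⋖ y → ρ₁ y = ρ₁ x + 1)
    (ρ₂ : K₂ → ℕ) (hρ₂ : ∀ x y : K₂, x ⋖ y → ρ₂ y = ρ₂ x + 1)
    (M : K₁ × K₂ → K₁ × K₂) (hM : IsSpecialPartialMatching M)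
    (htop : (M ⊤).2 = ⊤) :
    ∃ N : K₁ → K₁, IsSpecialPartialMatching N ∧ M = fun p => (N p.1, p.2) := by
  obtain ⟨hinv, hMtop, hrel, hcomp⟩ := hM
  have hinj : Function.Injective M := fun a b h => by rw [← hinv a, h, hinv]
  -- Claim A: the top slice is preserved.
  have claimA : ∀ x : K₁, (M (x, ⊤)).2 = ⊤ := by
    intro x
    induction x using ((Finite.to_wellFoundedGT (α := K₁)).wf).induction with
    | _ x IH =>
      by_contra hbad
      -- establish the bad case : M (x,⊤) = (x, v) with v ⋖ ⊤
      have hv : (M (x, ⊤)).2 ⋖ ⊤ ∧ (M (x, ⊤)).1 = x := by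
        rcases hrel (x, ⊤) with h | h | h
        · rcases Prod.covBy_iff.1 h with ⟨_, h2⟩ | ⟨h2, h1⟩
          · exact absurd h2 hbad
          · exact ⟨h2, h1⟩
        · rcases Prod.covBy_iff.1 h with ⟨_, h2⟩ | ⟨h2, _⟩
          · exact absurd h2.symm hbad
          · exact absurd le_top h2.lt.not_ge
        · exact absurd (congrArg Prod.snd h) hbad
      set v := (M (x, ⊤)).2 with hvdef
      have hMx : M (x, ⊤) = (x, v) := Prod.ext hv.2 rfl
      have hxt : x ≠ ⊤ := by
        rintro rfl
        exact hbad htop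
      obtain ⟨x', hxx', -⟩ := spm_exists_covBy_le hxt.lt_top
      have hMxv : M (x, v) = (x, ⊤) := by rw [← hMx, hinv]
      have hedge : ((x, v) : K₁ × K₂) ⋖ (x', v) := Prod.mk_covBy_mk_iff_left.2 hxx'
      have hne : ((x, v) : K₁ × K₂) ≠ M (x', v) := by
        intro h
        have h2 : M (x, v) = (x', v) := by rw [h, hinv]
        rw [hMxv] at h2
        exact hxx'.ne (congrArg Prod.fst h2)
      have hle : ((x, ⊤) : K₁ × K₂) ≤ M (x', v) := by
        have := hcomp _ _ hedge hne
        rwa [hMxv] at this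
      have hvt : (⊤ : K₂) ≤ v → False := fun h => hv.1.lt.not_ge h
      rcases hrel (x', v) with h | h | h
      · exact hvt (hle.2.trans h.le.2)
      · rcases Prod.covBy_iff.1 h with ⟨_, h2⟩ | ⟨h2, h1⟩
        · exact hvt (hle.2.trans h2.symm.le)
        · have hMx'v : M (x', v) = (x', ⊤) := Prod.ext h1.symm (top_le_iff.1 hle.2)
          have hMx't : M (x', ⊤) = (x', v) := by rw [← hMx'v, hinv]
          have := IH x' hxx'.lt
          rw [hMx't] at this
          exact hv.1.ne this
      · exact hvt (h ▸ hle).2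
  set N : K₁ → K₁ := fun x => (M (x, ⊤)).1 with hNdef
  have hMN : ∀ x, M (x, ⊤) = (N x, ⊤) := fun x => Prod.ext rfl (claimA x)
  have hNinv : ∀ x, N (N x) = x := by
    intro x
    have h := hinv (x, ⊤)
    rw [hMN x, hMN (N x)] at h
    exact congrArg Prod.fst h
  have hNtop : N ⊤ ⋖ ⊤ := by
    have h : M (⊤, ⊤) ⋖ ((⊤, ⊤) : K₁ × K₂) := hMtop
    rw [hMN ⊤] at h
    exact Prod.mk_covBy_mk_iff_left.1 h
  have hNrel : ∀ x, N x ⋖ x ∨ x ⋖ N x ∨ N x = x := by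
    intro x
    rcases hrel (x, ⊤) with h | h | h
    · rw [hMN x] at h; exact Or.inl (Prod.mk_covBy_mk_iff_left.1 h)
    · rw [hMN x] at h; exact Or.inr (Or.inl (Prod.mk_covBy_mk_iff_left.1 h))
    · rw [hMN x] at h; exact Or.inr (Or.inr (congrArg Prod.fst h))
  have hNcomp : ∀ x y : K₁, x ⋖ y → x ≠ N y → N x ≤ N y := by
    intro x y hxy hne
    have hedge : ((x, ⊤) : K₁ × K₂) ⋖ (y, ⊤) := Prod.mk_covBy_mk_iff_left.2 hxy
    have hne' : ((x, ⊤) : K₁ × K₂) ≠ M (y, ⊤) := by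
      rw [hMN y]; exact fun h => hne (congrArg Prod.fst h)
    have := hcomp _ _ hedge hne'
    rw [hMN x, hMN y] at this
    exact this.1
  have hNrank : ∀ c, ρ₁ (N c) ≤ ρ₁ c + 1 := by
    intro c
    rcases hNrel c with h | h | h
    · have := hρ₁ _ _ h; omega
    · have := hρ₁ _ _ h; omega
    · rw [h]; omega
  -- Claim B: every slice is preserved and given by N.
  have claimB : ∀ (y : K₂) (x : K₁), M (x, y) = (N x, y) := by
    intro y
    induction y using ((Finite.to_wellFoundedGT (α := K₂)).wf).induction with
    | _ y IHy =>
      rcases eq_or_ne y ⊤ with rfl | hyt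
      · exact hMN
      obtain ⟨y', hyy', -⟩ := spm_exists_covBy_le hyt.lt_top
      have IHy' : ∀ x, M (x, y') = (N x, y') := IHy y' hyy'.lt
      intro x
      induction x using ((Finite.to_wellFoundedGT (α := K₁)).wf).induction with
      | _ x IHx =>
        -- Step 0 : M (x,y) ≤ (N x, y')
        have hedge0 : ((x, y) : K₁ × K₂) ⋖ (x, y') := Prod.mk_covBy_mk_iff_right.2 hyy'
        have hne0 : ((x, y) : K₁ × K₂) ≠ M (x, y') := by
          rw [IHy' x]; exact fun h => hyy'.ne (congrArg Prod.snd h)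
        have hle0 : M (x, y) ≤ (N x, y') := by
          have := hcomp _ _ hedge0 hne0
          rwa [IHy' x] at this
        rcases hNrel x with hdn | hup | heq
        · -- case N x ⋖ x
          rcases hrel (x, y) with h | h | h
          · rcases Prod.covBy_iff.1 h with ⟨h1, h2⟩ | ⟨h1, h2⟩
            · -- (M (x,y)).1 ⋖ x : conclude via ranks
              have h1' : (M (x, y)).1 ⋖ x := h1
              have h2' : (M (x, y)).2 = y := h2
              have hle1 : (M (x, y)).1 ≤ N x := hle0.1
              have hr1 : ρ₁ x = ρ₁ (M (x, y)).1 + 1 := hρ₁ _ _ h1'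
              have hr2 : ρ₁ x = ρ₁ (N x) + 1 := hρ₁ _ _ hdn
              have h3 : (M (x, y)).1 = N x :=
                spm_eq_of_le_of_rank_le ρ₁ hρ₁ hle1 (by omega)
              exact Prod.ext h3 h2'
            · -- (M (x,y)).1 = x : contradiction
              exact absurd (h2.symm.le.trans hle0.1) hdn.lt.not_ge
          · rcases Prod.covBy_iff.1 h with ⟨h1, h2⟩ | ⟨h1, h2⟩
            · have hle1 : (M (x, y)).1 ≤ N x := hle0.1
              exact absurd ((h1.lt.trans_le hle1).trans hdn.lt) (lt_irrefl x)
            · exact absurd (h2.le.trans hle0.1) hdn.lt.not_ge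
          · have h4 : ((x, y) : K₁ × K₂) ≤ (N x, y') := (le_of_eq h.symm).trans hle0
            exact absurd h4.1 hdn.lt.not_ge
        · -- case x ⋖ N x : use inner IH at N x
          have h1 : M (N x, y) = (x, y) := by rw [IHx (N x) hup.lt, hNinv x]
          have h2 := hinv (N x, y)
          rw [h1] at h2
          exact h2
        · -- case N x = x
          rw [heq]
          have hxt : x ≠ ⊤ := fun h => hNtop.ne (by rw [← h, heq])
          rcases hrel (x, y) with h | h | h
          · -- down
            rcases Prod.covBy_iff.1 h with ⟨h1, h2⟩ | ⟨h1, h2⟩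
            · -- M (x,y) = (c, y), c ⋖ x
              exfalso
              set c := (M (x, y)).1 with hcdef
              have hMxy : M (x, y) = (c, y) := Prod.ext rfl h2
              have hMc : M (c, y) = (x, y) := by rw [← hMxy, hinv]
              have hedge : ((c, y) : K₁ × K₂) ⋖ (c, y') := Prod.mk_covBy_mk_iff_right.2 hyy'
              have hne : ((c, y) : K₁ × K₂) ≠ M (c, y') := by
                rw [IHy' c]; exact fun hh => hyy'.ne (congrArg Prod.snd hh)
              have hle : ((x, y) : K₁ × K₂) ≤ (N c, y') := by
                have := hcomp _ _ hedge hne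
                rwa [hMc, IHy' c] at this
              have hle1 : x ≤ N c := hle.1
              have h1' : c ⋖ x := h1
              have hr1 : ρ₁ x = ρ₁ c + 1 := hρ₁ _ _ h1'
              have hxNc : x = N c :=
                spm_eq_of_le_of_rank_le ρ₁ hρ₁ hle1 (by have := hNrank c; omega)
              have : c = x := by rw [← hNinv c, ← hxNc, heq]
              exact h1.ne this
            · -- M (x,y) = (x, v), v ⋖ y
              exfalso
              set v := (M (x, y)).2 with hvdef
              have hMxy : M (x, y) = (x, v) := Prod.ext h2 rfl
              have hMv : M (x, v) = (x, y) := by rw [← hMxy, hinv]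
              obtain ⟨x', hxx', -⟩ := spm_exists_covBy_le hxt.lt_top
              have hedge : ((x, v) : K₁ × K₂) ⋖ (x', v) := Prod.mk_covBy_mk_iff_left.2 hxx'
              have hne : ((x, v) : K₁ × K₂) ≠ M (x', v) := by
                intro hh
                have h3 : M (x, v) = (x', v) := by rw [hh, hinv]
                rw [hMv] at h3
                exact hxx'.ne (congrArg Prod.fst h3)
              have hle : ((x, y) : K₁ × K₂) ≤ M (x', v) := by
                have := hcomp _ _ hedge hne
                rwa [hMv] at this
              have hvy : ¬ y ≤ v := h1.lt.not_ge
              rcases hrel (x', v) with hh | hh | hh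
              · exact hvy (hle.2.trans hh.le.2)
              · rcases Prod.covBy_iff.1 hh with ⟨g1, g2⟩ | ⟨g1, g2⟩
                · exact hvy (hle.2.trans g2.symm.le)
                · -- (x',v) ⋖ M (x',v) with second coord covering
                  have g1' : v ⋖ (M (x', v)).2 := g1
                  have hle2 : y ≤ (M (x', v)).2 := hle.2
                  have hr1 : ρ₂ (M (x', v)).2 = ρ₂ v + 1 := hρ₂ _ _ g1'
                  have hr2 : ρ₂ y = ρ₂ v + 1 := hρ₂ _ _ h1
                  have hye : y = (M (x', v)).2 :=
                    spm_eq_of_le_of_rank_le ρ₂ hρ₂ hle2 (by omega)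
                  have hMx'v : M (x', v) = (x', y) := Prod.ext g2.symm hye.symm
                  have hMx'y : M (x', y) = (x', v) := by rw [← hMx'v, hinv]
                  have hthis := IHx x' hxx'.lt
                  rw [hMx'y] at hthis
                  have : v = y := congrArg Prod.snd hthis
                  exact h1.ne this
              · exact hvy (hh ▸ hle).2
          · -- up
            exfalso
            rcases Prod.covBy_iff.1 h with ⟨h1, h2⟩ | ⟨h1, h2⟩
            · have hle1 : (M (x, y)).1 ≤ N x := hle0.1
              rw [heq] at hle1
              exact absurd (h1.lt.trans_le hle1) (lt_irrefl x)
            · have h1' : y ⋖ (M (x, y)).2 := h1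
              have hle2 : (M (x, y)).2 ≤ y' := hle0.2
              have hr1 : ρ₂ (M (x, y)).2 = ρ₂ y + 1 := hρ₂ _ _ h1'
              have hr2 : ρ₂ y' = ρ₂ y + 1 := hρ₂ _ _ hyy'
              have hwy : (M (x, y)).2 = y' :=
                spm_eq_of_le_of_rank_le ρ₂ hρ₂ hle2 (by omega)
              have hMxy : M (x, y) = (x, y') := Prod.ext h2.symm hwy
              have hMxy' : M (x, y') = (x, y) := by rw [← hMxy, hinv]
              rw [IHy' x, heq] at hMxy'
              exact hyy'.ne (congrArg Prod.snd hMxy').symm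
          · exact h
  refine ⟨N, ⟨hNinv, hNtop, hNrel, hNcomp⟩, ?_⟩
  funext p
  obtain ⟨a, b⟩ := p
  exact claimB b a

private lemma spm_prod_left {K₁ K₂ : Type*} [PartialOrder K₁] [PartialOrder K₂]
    [OrderTop K₁] [OrderTop K₂] {N : K₁ → K₁} (hN : IsSpecialPartialMatching N) :
    IsSpecialPartialMatching (fun p : K₁ × K₂ => (N p.1, p.2)) := by
  obtain ⟨hinv, htop, hrel, hcomp⟩ := hN
  refine ⟨fun p => by simp [hinv], ?_, ?_, ?_⟩
  · exact Prod.mk_covBy_mk_iff_left.2 htop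
  · rintro ⟨a, b⟩
    rcases hrel a with h | h | h
    · exact Or.inl (Prod.mk_covBy_mk_iff_left.2 h)
    · exact Or.inr (Or.inl (Prod.mk_covBy_mk_iff_left.2 h))
    · exact Or.inr (Or.inr (by simp [h]))
  · rintro ⟨a, b⟩ ⟨c, d⟩ hcov hne
    rcases Prod.mk_covBy_mk_iff.1 hcov with ⟨h, rfl⟩ | ⟨h, rfl⟩
    · exact Prod.mk_le_mk.2 ⟨hcomp a c h (fun he => hne (by simp [he])), le_rfl⟩
    · exact Prod.mk_le_mk.2 ⟨le_rfl, h.le⟩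

private lemma spm_prod_right {K₁ K₂ : Type*} [PartialOrder K₁] [PartialOrder K₂]
    [OrderTop K₁] [OrderTop K₂] {N : K₂ → K₂} (hN : IsSpecialPartialMatching N) :
    IsSpecialPartialMatching (fun p : K₁ × K₂ => (p.1, N p.2)) := by
  obtain ⟨hinv, htop, hrel, hcomp⟩ := hN
  refine ⟨fun p => by simp [hinv], ?_, ?_, ?_⟩
  · exact Prod.mk_covBy_mk_iff_right.2 htop
  · rintro ⟨a, b⟩
    rcases hrel b with h | h | h
    · exact Or.inl (Prod.mk_covBy_mk_iff_right.2 h)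
    · exact Or.inr (Or.inl (Prod.mk_covBy_mk_iff_right.2 h))
    · exact Or.inr (Or.inr (by simp [h]))
  · rintro ⟨a, b⟩ ⟨c, d⟩ hcov hne
    rcases Prod.mk_covBy_mk_iff.1 hcov with ⟨h, rfl⟩ | ⟨h, rfl⟩
    · exact Prod.mk_le_mk.2 ⟨h.le, le_rfl⟩
    · exact Prod.mk_le_mk.2 ⟨le_rfl, hcomp b d h (fun he => hne (by simp [he]))⟩

private lemma spm_swap {K₁ K₂ : Type*} [PartialOrder K₁] [PartialOrder K₂]
    [OrderTop K₁] [OrderTop K₂] {M : K₁ × K₂ → K₁ × K₂}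
    (hM : IsSpecialPartialMatching M) :
    IsSpecialPartialMatching (fun q : K₂ × K₁ => (M q.swap).swap) := by
  obtain ⟨hinv, htop, hrel, hcomp⟩ := hM
  refine ⟨fun q => by simp [hinv], ?_, ?_, ?_⟩
  · exact Prod.swap_covBy_swap.2 htop
  · rintro ⟨b, a⟩
    rcases hrel (a, b) with h | h | h
    · exact Or.inl (Prod.swap_covBy_swap.2 h)
    · exact Or.inr (Or.inl (Prod.swap_covBy_swap.2 h))
    · exact Or.inr (Or.inr (show (M (a, b)).swap = (b, a) by rw [h]; rfl))
  · intro a b hab hne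
    have h1 : a.swap ⋖ b.swap := Prod.swap_covBy_swap.2 hab
    have h2 : a.swap ≠ M b.swap := by
      intro h
      apply hne
      show a = (M b.swap).swap
      rw [← h, Prod.swap_swap]
    have := hcomp _ _ h1 h2
    exact Prod.swap_le_swap.2 this

end Key

/-- `M` is a special partial matching of the product `K₁ × K₂` of finite
graded posets iff `M = N × id` for a special partial matching `N` of `K₁`, or
`M = id × N` for a special partial matching `N` of `K₂`. -/
theorem stmt_19 {K₁ K₂ : Type*} [PartialOrder K₁] [PartialOrder K₂]
    [Fintype K₁] [Fintype K₂] [OrderBot K₁] [OrderTop K₁] [OrderBot K₂] [OrderTop K₂]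
    (ρ₁ : K₁ → ℕ) (hρ₁bot : ρ₁ ⊥ = 0) (hρ₁ : ∀ x y : K₁, x ⋖ y → ρ₁ y = ρ₁ x + 1)
    (ρ₂ : K₂ → ℕ) (hρ₂bot : ρ₂ ⊥ = 0) (hρ₂ : ∀ x y : K₂, x ⋖ y → ρ₂ y = ρ₂ x + 1)
    (M : K₁ × K₂ → K₁ × K₂) :
    IsSpecialPartialMatching M ↔
      ((∃ N : K₁ → K₁, IsSpecialPartialMatching N ∧ M = fun p => (N p.1, p.2)) ∨
       (∃ N : K₂ → K₂, IsSpecialPartialMatching N ∧ M = fun p => (p.1, N p.2))) := by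
  constructor
  · intro hM
    rcases Prod.covBy_iff.1 hM.2.1 with ⟨h1, h2⟩ | ⟨h1, h2⟩
    · -- (M ⊤).2 = ⊤
      obtain ⟨N, hN, hMN⟩ := spm_key ρ₁ hρ₁ ρ₂ hρ₂ M hM h2
      exact Or.inl ⟨N, hN, hMN⟩
    · -- (M ⊤).1 = ⊤, work with the swap
      obtain ⟨N, hN, hMN⟩ := spm_key ρ₂ hρ₂ ρ₁ hρ₁
        (fun q : K₂ × K₁ => (M q.swap).swap) (spm_swap hM) h2
      refine Or.inr ⟨N, hN, funext fun p => ?_⟩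
      obtain ⟨a, b⟩ := p
      have h := congrFun hMN (b, a)
      have h2' := congrArg Prod.swap h
      rw [Prod.swap_swap] at h2'
      exact h2'
  · rintro (⟨N, hN, rfl⟩ | ⟨N, hN, rfl⟩)
    · exact spm_prod_left hN
    · exact spm_prod_right hN
end
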